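/- Consider n ≥ 1 agents with position and velocity states x_i(k), v_i(k) ∈ ℝ^r for k ∈ ℤ and sampling period T > 0. For each i let V_i ⊆ ℝ^r be nonempty, closed and bounded with 0 ∈ V_i, max_{x∈V_i}‖S_{V_i}(x)‖ = ρ̄_i > 0 and inf{‖S_{V_i}(x)‖ : x ∉ V_i} = ρ_i > 0 (Assumption 1). For k ≥ 0 the closed loop is x_i(k+1) = x_i(k) + v_i(k)T, v_i(k+1) = S_{V_i}(y_i(k)), where y_i(k) = v_i(k) − p_i(k)v_i(k)T + π_i(k) and π_i(k) = Σ_{j≠i} a_{ij}(k)(x_j(k − τ_{ij}(k)) − x_i(k))T, with nonnegative edge weights satisfying a_{ij}(k) ≥ μ_c > 0 whenever a_{ij}(k) > 0, and integer delays 0 ≤ τ_{ij}(k) ≤ M. For k < 0 the states satisfy x_i(k+1) = x_i(k) + v_i(k)T, and v_i(0) = S_{V_i}(v_i(0)). Define e_i(k) = ‖S_{V_i}(y_i(k))‖/‖y_i(k)‖ if y_i(k) ≠ 0, e_i(k) = 1 if y_i(k) = 0, and b_i(k) = (1 − e_i(k)(1 − p_i(k)T))/T. Assume (Assumption 2): 0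 < p_i(k)T < 1, 0 < b_i(k) ≤ p_i(k+1) < 1/T for all i and k ≥ 0, and there exist constants d_i > 0 with p_i(k)² > 4d_i ≥ 4Σ_{j≠i} a_{ij}(k) for all i and k ≥ 0. Assume also (Assumption 3, joint connectivity): there exist integers 0 = k_0 < k_1 < k_2 < ⋯ with k_{m+1} − k_m ≤ η for all m, such that for each m the directed graph on {1,…,n} having an edge from j to i whenever a_{ij}(k) > 0 for some k ∈ [k_m, k_{m+1}) contains a node with a directed path to every other node. Then: (a) there exist a vector x̄ ∈ ℝ^r and constants C > 0 and μ ∈ (0,1] such that ‖x_i(k) − x̄‖ ≤ C(1−μ)^k for all i and all k ≥ 0; (b) v_i(k) ∈ V_i for all i and all k ≥ 0, and lim_{k→∞} v_i(k) = 0 for all i. -/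

import Mathlib

open scoped Classical

/-- The constraint operator: `SOp V 0 = 0` and, for `x ≠ 0`,
`SOp V x = (sup B_V(x) / ‖x‖) • x` where
`B_V(x) = {β ∈ [0, ‖x‖] : αβx/‖x‖ ∈ V for all α ∈ [0,1]}`. -/
noncomputable def SOp {r : ℕ} (V : Set (EuclideanSpace ℝ (Fin r)))
    (x : EuclideanSpace ℝ (Fin r)) : EuclideanSpace ℝ (Fin r) :=
  if x = 0 then 0
  else (sSup {β : ℝ | β ∈ Set.Icc (0 : ℝ) ‖x‖ ∧
      ∀ α ∈ Set.Icc (0 : ℝ) 1, (α * β / ‖x‖) • x ∈ V} / ‖x‖) • x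

namespace SOpAux

variable {r : ℕ} (V : Set (EuclideanSpace ℝ (Fin r)))

def BV (x : EuclideanSpace ℝ (Fin r)) : Set ℝ :=
  {β : ℝ | β ∈ Set.Icc (0 : ℝ) ‖x‖ ∧
      ∀ α ∈ Set.Icc (0 : ℝ) 1, (α * β / ‖x‖) • x ∈ V}

lemma SOp_eq (x : EuclideanSpace ℝ (Fin r)) (hx : x ≠ 0) :
    SOp V x = (sSup (BV V x) / ‖x‖) • x := by
  simp [SOp, hx, BV]

lemma zero_mem_BV (h0 : (0 : EuclideanSpace ℝ (Fin r)) ∈ V) (x : EuclideanSpace ℝ (Fin r)) :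
    (0 : ℝ) ∈ BV V x := by
  refine ⟨⟨le_refl _, norm_nonneg x⟩, fun α _ => ?_⟩
  simp [h0]

lemma BV_subset_Icc (x : EuclideanSpace ℝ (Fin r)) : BV V x ⊆ Set.Icc (0:ℝ) ‖x‖ :=
  fun _ hb => hb.1

lemma bddAbove_BV (x : EuclideanSpace ℝ (Fin r)) : BddAbove (BV V x) :=
  (bddAbove_Icc).mono (BV_subset_Icc V x)

lemma sSup_BV_nonneg (h0 : (0 : EuclideanSpace ℝ (Fin r)) ∈ V) (x : EuclideanSpace ℝ (Fin r)) :
    0 ≤ sSup (BV V x) :=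
  le_csSup (bddAbove_BV V x) (zero_mem_BV V h0 x)

lemma sSup_BV_le_norm (h0 : (0 : EuclideanSpace ℝ (Fin r)) ∈ V) (x : EuclideanSpace ℝ (Fin r)) :
    sSup (BV V x) ≤ ‖x‖ :=
  csSup_le ⟨0, zero_mem_BV V h0 x⟩ (fun _ hb => hb.1.2)

lemma norm_SOp (h0 : (0 : EuclideanSpace ℝ (Fin r)) ∈ V) (x : EuclideanSpace ℝ (Fin r))
    (hx : x ≠ 0) : ‖SOp V x‖ = sSup (BV V x) := by
  rw [SOp_eq V x hx, norm_smul]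
  rw [Real.norm_eq_abs, abs_div, abs_of_nonneg (sSup_BV_nonneg V h0 x),
    abs_of_nonneg (norm_nonneg x), div_mul_cancel₀]
  exact norm_ne_zero_iff.mpr hx

lemma norm_SOp_le (h0 : (0 : EuclideanSpace ℝ (Fin r)) ∈ V) (x : EuclideanSpace ℝ (Fin r)) :
    ‖SOp V x‖ ≤ ‖x‖ := by
  by_cases hx : x = 0
  · simp [SOp, hx]
  · rw [norm_SOp V h0 x hx]; exact sSup_BV_le_norm V h0 x

lemma isClosed_BV (hV : IsClosed V) (x : EuclideanSpace ℝ (Fin r)) : IsClosed (BV V x) := by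
  have : BV V x = Set.Icc (0:ℝ) ‖x‖ ∩
      ⋂ α ∈ Set.Icc (0:ℝ) 1, (fun β : ℝ => (α * β / ‖x‖) • x) ⁻¹' V := by
    ext β
    simp only [BV, Set.mem_setOf_eq, Set.mem_inter_iff, Set.mem_iInter, Set.mem_preimage]
  rw [this]
  refine isClosed_Icc.inter (isClosed_biInter fun α _ => ?_)
  exact hV.preimage (by continuity)

lemma sSup_mem_BV (hV : IsClosed V) (h0 : (0 : EuclideanSpace ℝ (Fin r)) ∈ V)
    (x : EuclideanSpace ℝ (Fin r)) : sSup (BV V x) ∈ BV V x :=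
  (isClosed_BV V hV x).csSup_mem ⟨0, zero_mem_BV V h0 x⟩ (bddAbove_BV V x)

lemma SOp_mem (hV : IsClosed V) (h0 : (0 : EuclideanSpace ℝ (Fin r)) ∈ V)
    (x : EuclideanSpace ℝ (Fin r)) : SOp V x ∈ V := by
  by_cases hx : x = 0
  · simpa [SOp, hx] using h0
  · rw [SOp_eq V x hx]
    have h := (sSup_mem_BV V hV h0 x).2 1 ⟨zero_le_one, le_refl _⟩
    simpa using h

lemma SOp_eq_smul (h0 : (0 : EuclideanSpace ℝ (Fin r)) ∈ V) (x : EuclideanSpace ℝ (Fin r))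
    (hx : x ≠ 0) : SOp V x = (‖SOp V x‖ / ‖x‖) • x := by
  rw [norm_SOp V h0 x hx, SOp_eq V x hx]

/-- key lower bound: `min ρ ‖x‖ ≤ ‖SOp V x‖` when `ρ` is a lower bound for
`{‖SOp V y‖ : y ∉ V}`. -/
lemma norm_SOp_ge (h0 : (0 : EuclideanSpace ℝ (Fin r)) ∈ V) {ρ : ℝ}
    (hρ : ∀ y, y ∉ V → ρ ≤ ‖SOp V y‖) (x : EuclideanSpace ℝ (Fin r)) :
    min ρ ‖x‖ ≤ ‖SOp V x‖ := by
  by_cases hx : x = 0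
  · simp [SOp, hx, min_le_iff]
  by_cases hseg : ∀ α ∈ Set.Icc (0:ℝ) 1, (α * ‖x‖ / ‖x‖) • x ∈ V
  · -- the whole segment is in V, so ‖x‖ ∈ BV
    have hmem : ‖x‖ ∈ BV V x := ⟨⟨norm_nonneg x, le_refl _⟩, hseg⟩
    have : ‖x‖ ≤ sSup (BV V x) := le_csSup (bddAbove_BV V x) hmem
    rw [norm_SOp V h0 x hx]
    exact le_trans (min_le_right _ _) this
  · push_neg at hseg
    obtain ⟨α, hα, hαx⟩ := hseg
    have hxnorm : ‖x‖ ≠ 0 := norm_ne_zero_iff.mpr hx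
    have hαx' : α • x ∉ V := by
      have : α * ‖x‖ / ‖x‖ = α := by field_simp
      rwa [this] at hαx
    have hα0 : α ≠ 0 := by
      rintro rfl; exact hαx' (by simpa using h0)
    have hαpos : 0 < α := lt_of_le_of_ne hα.1 (Ne.symm hα0)
    have hw : α • x ≠ 0 := by
      simp [smul_eq_zero, hα0, hx]
    have hnormw : ‖α • x‖ = α * ‖x‖ := by
      rw [norm_smul, Real.norm_eq_abs, abs_of_pos hαpos]
    -- BV of α • x is contained in BV of x
    have hsub : BV V (α • x) ⊆ BV V x := by
      rintro β ⟨⟨hβ0, hβle⟩, hβseg⟩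
      refine ⟨⟨hβ0, le_trans hβle ?_⟩, fun γ hγ => ?_⟩
      · rw [hnormw]
        nlinarith [norm_nonneg x, hα.2]
      · have := hβseg γ hγ
        rw [hnormw] at this
        have heq : (γ * β / (α * ‖x‖)) • α • x = (γ * β / ‖x‖) • x := by
          rw [smul_smul]
          congr 1
          field_simp
        rwa [heq] at this
    have h1 : ρ ≤ ‖SOp V (α • x)‖ := hρ _ hαx'
    rw [norm_SOp V h0 _ hw] at h1
    have h2 : sSup (BV V (α • x)) ≤ sSup (BV V x) :=
      csSup_le_csSup (bddAbove_BV V x) ⟨0, zero_mem_BV V h0 _⟩ hsub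
    rw [norm_SOp V h0 x hx]
    exact le_trans (min_le_left _ _) (le_trans h1 h2)

end SOpAux


open scoped Classical
open Finset

/-- An abstract delayed convex-combination consensus system. -/
structure Sys (n M : ℕ) (β : ℝ) where
  X : ℕ → Fin n → ℝ
  S : ℕ → Fin n → ℝ
  θ : Fin n → ℝ
  lam : ℕ → Fin n → ℝ
  del : ℕ → Fin n → ℝ
  w : ℕ → Fin n → Fin n → ℝ
  D : ℕ → Fin n → Fin n → ℕ
  hβ0 : 0 < β
  hβ2 : β ≤ 1/2
  hθ1 : ∀ i, β ≤ θ i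
  hθ2 : ∀ i, θ i ≤ 1 - β
  hlam : ∀ k, M ≤ k → ∀ i, β ≤ lam k i
  hdel : ∀ k, M ≤ k → ∀ i, β ≤ del k i
  hw : ∀ k i j, 0 ≤ w k i j
  hsum : ∀ k, M ≤ k → ∀ i,
    lam k i + del k i + ∑ j ∈ Finset.univ.filter (fun j => j ≠ i), w k i j = 1
  hD1 : ∀ k, M ≤ k → ∀ i j, k - M ≤ D k i j
  hD2 : ∀ k, M ≤ k → ∀ i j, D k i j ≤ k
  hX : ∀ k, M ≤ k → ∀ i, X (k+1) i = (1 - θ i) * X k i + θ i * S k i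
  hS : ∀ k, M ≤ k → ∀ i, S (k+1) i = lam k i * S k i + del k i * X k i
    + ∑ j ∈ Finset.univ.filter (fun j => j ≠ i), w k i j * X (D k i j) j

namespace Sys

variable {n M : ℕ} {β : ℝ}

/-- The negated system. -/
def neg (Γ : Sys n M β) : Sys n M β where
  X := fun k i => - Γ.X k i
  S := fun k i => - Γ.S k i
  θ := Γ.θ
  lam := Γ.lam
  del := Γ.del
  w := Γ.w
  D := Γ.D
  hβ0 := Γ.hβ0
  hβ2 := Γ.hβ2
  hθ1 := Γ.hθ1
  hθ2 := Γ.hθ2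
  hlam := Γ.hlam
  hdel := Γ.hdel
  hw := Γ.hw
  hsum := Γ.hsum
  hD1 := Γ.hD1
  hD2 := Γ.hD2
  hX := by
    intro k hk i
    have h := Γ.hX k hk i
    rw [h]; ring
  hS := by
    intro k hk i
    have h := Γ.hS k hk i
    have hsum' : ∑ j ∈ Finset.univ.filter (fun j => j ≠ i),
        Γ.w k i j * -Γ.X (Γ.D k i j) j
        = - ∑ j ∈ Finset.univ.filter (fun j => j ≠ i),
            Γ.w k i j * Γ.X (Γ.D k i j) j := by
      rw [← Finset.sum_neg_distrib]
      exact Finset.sum_congr rfl (fun j _ => by ring)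
    rw [hsum', h]
    ring

lemma sum_w_eq (Γ : Sys n M β) {k : ℕ} (hk : M ≤ k) (i : Fin n) :
    ∑ j ∈ Finset.univ.filter (fun j => j ≠ i), Γ.w k i j = 1 - Γ.lam k i - Γ.del k i := by
  have := Γ.hsum k hk i
  linarith

lemma lam_nonneg (Γ : Sys n M β) {k : ℕ} (hk : M ≤ k) (i : Fin n) : 0 ≤ Γ.lam k i :=
  le_trans Γ.hβ0.le (Γ.hlam k hk i)

lemma del_nonneg (Γ : Sys n M β) {k : ℕ} (hk : M ≤ k) (i : Fin n) : 0 ≤ Γ.del k i :=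
  le_trans Γ.hβ0.le (Γ.hdel k hk i)

lemma theta_nonneg (Γ : Sys n M β) (i : Fin n) : 0 ≤ Γ.θ i :=
  le_trans Γ.hβ0.le (Γ.hθ1 i)

lemma theta_le_one (Γ : Sys n M β) (i : Fin n) : Γ.θ i ≤ 1 :=
  le_trans (Γ.hθ2 i) (by linarith [Γ.hβ0])

/-- `i` is `ε`-low at time `t` (relative to the upper bound `H`). -/
def Low (Γ : Sys n M β) (H ε : ℝ) (t : ℕ) (i : Fin n) : Prop :=
  Γ.S t i ≤ H - ε ∧ ∀ l, t - M ≤ l → l ≤ t → Γ.X l i ≤ H - ε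

lemma low_mono (Γ : Sys n M β) {H ε ε' : ℝ} (h : ε' ≤ ε) {t : ℕ} {i : Fin n}
    (hl : Low Γ H ε t i) : Low Γ H ε' t i :=
  ⟨le_trans hl.1 (by linarith), fun l h1 h2 => le_trans (hl.2 l h1 h2) (by linarith)⟩

lemma S_next_le (Γ : Sys n M β) {H : ℝ} {k0 : ℕ} (hk0 : M ≤ k0)
    (hXH : ∀ l, k0 - M ≤ l → ∀ i, Γ.X l i ≤ H)
    {t : ℕ} (ht : k0 ≤ t) {i : Fin n} {εS εX : ℝ}
    (hSb : Γ.S t i ≤ H - εS) (hXb : Γ.X t i ≤ H - εX) :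
    Γ.S (t+1) i ≤ H - (Γ.lam t i * εS + Γ.del t i * εX) := by
  have htM : M ≤ t := le_trans hk0 ht
  rw [Γ.hS t htM i]
  have h1 : Γ.lam t i * Γ.S t i ≤ Γ.lam t i * (H - εS) :=
    mul_le_mul_of_nonneg_left hSb (Γ.lam_nonneg htM i)
  have h2 : Γ.del t i * Γ.X t i ≤ Γ.del t i * (H - εX) :=
    mul_le_mul_of_nonneg_left hXb (Γ.del_nonneg htM i)
  have h3 : ∑ j ∈ Finset.univ.filter (fun j => j ≠ i), Γ.w t i j * Γ.X (Γ.D t i j) j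
      ≤ ∑ j ∈ Finset.univ.filter (fun j => j ≠ i), Γ.w t i j * H := by
    apply Finset.sum_le_sum
    intro j _
    apply mul_le_mul_of_nonneg_left _ (Γ.hw t i j)
    apply hXH
    calc k0 - M ≤ t - M := by omega
    _ ≤ Γ.D t i j := Γ.hD1 t htM i j
  rw [← Finset.sum_mul, Γ.sum_w_eq htM i] at h3
  nlinarith [Γ.hsum t htM i]

lemma X_next_le (Γ : Sys n M β) {H : ℝ} {t : ℕ} (ht : M ≤ t) {i : Fin n} {εS εX : ℝ}
    (hSb : Γ.S t i ≤ H - εS) (hXb : Γ.X t i ≤ H - εX) :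
    Γ.X (t+1) i ≤ H - ((1 - Γ.θ i) * εX + Γ.θ i * εS) := by
  rw [Γ.hX t ht i]
  nlinarith [mul_le_mul_of_nonneg_left hSb (Γ.theta_nonneg i),
    mul_le_mul_of_nonneg_left hXb (by linarith [Γ.theta_le_one i] : (0:ℝ) ≤ 1 - Γ.θ i)]

lemma both_low (Γ : Sys n M β) {H : ℝ} {k0 : ℕ} (hk0 : M ≤ k0)
    (hXH : ∀ l, k0 - M ≤ l → ∀ i, Γ.X l i ≤ H)
    {t : ℕ} (ht : k0 ≤ t) {i : Fin n} {ε : ℝ} (hε : 0 ≤ ε)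
    (hSb : Γ.S t i ≤ H - ε) (hXb : Γ.X t i ≤ H - ε) :
    ∀ s, Γ.S (t+s) i ≤ H - β^s * ε ∧ Γ.X (t+s) i ≤ H - β^s * ε := by
  intro s
  induction s with
  | zero => simpa using ⟨hSb, hXb⟩
  | succ s ih =>
    have hβs : (0:ℝ) ≤ β ^ s * ε := mul_nonneg (pow_nonneg Γ.hβ0.le s) hε
    have ht' : k0 ≤ t + s := by omega
    have htM' : M ≤ t + s := le_trans hk0 ht'
    have hβmono : β ^ (s+1) * ε ≤ β ^ s * ε := by
      have : β ^ (s+1) ≤ β ^ s :=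
        pow_le_pow_of_le_one Γ.hβ0.le (by linarith [Γ.hβ2]) (by omega)
      nlinarith
    constructor
    · have hstep := Γ.S_next_le hk0 hXH ht' ih.1 ih.2
      have hld : β ^ (s+1) * ε ≤ Γ.lam (t+s) i * (β^s * ε) + Γ.del (t+s) i * (β^s * ε) := by
        have h1 : β ≤ Γ.lam (t+s) i + Γ.del (t+s) i := by
          have := Γ.hlam (t+s) htM' i
          have := Γ.hdel (t+s) htM' i
          have := Γ.hβ0
          linarith
        calc β ^ (s+1) * ε = β * (β^s * ε) := by ring
        _ ≤ (Γ.lam (t+s) i + Γ.del (t+s) i) * (β^s * ε) :=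
            mul_le_mul_of_nonneg_right h1 hβs
        _ = _ := by ring
      show Γ.S (t + s + 1) i ≤ H - β ^ (s+1) * ε
      linarith
    · have hstep := Γ.X_next_le htM' ih.1 ih.2
      have hcomb : (1 - Γ.θ i) * (β^s * ε) + Γ.θ i * (β^s * ε) = β^s * ε := by ring
      rw [hcomb] at hstep
      show Γ.X (t + s + 1) i ≤ H - β ^ (s+1) * ε
      linarith

lemma low_step (Γ : Sys n M β) {H : ℝ} {k0 : ℕ} (hk0 : M ≤ k0)
    (hXH : ∀ l, k0 - M ≤ l → ∀ i, Γ.X l i ≤ H)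
    {t : ℕ} (ht : k0 ≤ t) {i : Fin n} {ε : ℝ} (hε : 0 ≤ ε)
    (hl : Low Γ H ε t i) : Low Γ H (β * ε) (t+1) i := by
  have hβε : β * ε ≤ ε := by nlinarith [Γ.hβ0, Γ.hβ2]
  have hXt : Γ.X t i ≤ H - ε := hl.2 t (by omega) (le_refl t)
  constructor
  · have h := (Γ.both_low hk0 hXH ht hε hl.1 hXt 1).1
    simpa using h
  · intro l h1 h2
    rcases Nat.lt_or_ge l (t+1) with h | h
    · exact le_trans (hl.2 l (by omega) (by omega)) (by linarith)
    · have hle : l = t + 1 := by omega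
      subst hle
      have h := (Γ.both_low hk0 hXH ht hε hl.1 hXt 1).2
      simpa using h

lemma low_persist (Γ : Sys n M β) {H : ℝ} {k0 : ℕ} (hk0 : M ≤ k0)
    (hXH : ∀ l, k0 - M ≤ l → ∀ i, Γ.X l i ≤ H)
    {t : ℕ} (ht : k0 ≤ t) {i : Fin n} {ε : ℝ} (hε : 0 ≤ ε)
    (hl : Low Γ H ε t i) : ∀ s, Low Γ H (β ^ s * ε) (t+s) i := by
  intro s
  induction s with
  | zero => simpa using hl
  | succ s ih =>
    have h := Γ.low_step hk0 hXH (t := t + s) (by omega)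
      (mul_nonneg (pow_nonneg Γ.hβ0.le s) hε) ih
    have heq : β * (β ^ s * ε) = β ^ (s+1) * ε := by ring
    rw [heq] at h
    exact h

lemma low_of_both (Γ : Sys n M β) {H : ℝ} {k0 : ℕ} (hk0 : M ≤ k0)
    (hXH : ∀ l, k0 - M ≤ l → ∀ i, Γ.X l i ≤ H)
    {t : ℕ} (ht : k0 ≤ t) {i : Fin n} {ε : ℝ} (hε : 0 ≤ ε)
    (hSb : Γ.S t i ≤ H - ε) (hXb : Γ.X t i ≤ H - ε) :
    Low Γ H (β ^ M * ε) (t + M) i := by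
  constructor
  · exact (Γ.both_low hk0 hXH ht hε hSb hXb M).1
  · intro l h1 h2
    have hl : t ≤ l := by omega
    obtain ⟨s, rfl⟩ := Nat.exists_eq_add_of_le hl
    have h := (Γ.both_low hk0 hXH ht hε hSb hXb s).2
    have hs : s ≤ M := by omega
    have : β ^ M * ε ≤ β ^ s * ε := by
      have : β ^ M ≤ β ^ s :=
        pow_le_pow_of_le_one Γ.hβ0.le (by linarith [Γ.hβ2]) hs
      nlinarith
    linarith

/-- a single low `S` value makes the node fully low `M+1` steps later. -/
lemma single_S_low (Γ : Sys n M β) {H : ℝ} {k0 : ℕ} (hk0 : M ≤ k0)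
    (hXH : ∀ l, k0 - M ≤ l → ∀ i, Γ.X l i ≤ H)
    {t : ℕ} (ht : k0 ≤ t) {i : Fin n} {ε : ℝ} (hε : 0 ≤ ε)
    (hSb : Γ.S t i ≤ H - ε) : Low Γ H (β ^ (M+1) * ε) (t + (M+1)) i := by
  have hXt : Γ.X t i ≤ H - 0 := by simpa using hXH t (by omega) i
  have hS1 : Γ.S (t+1) i ≤ H - β * ε := by
    have h := Γ.S_next_le hk0 hXH ht hSb hXt
    have hβlam : β * ε ≤ Γ.lam t i * ε + Γ.del t i * 0 := by
      have := Γ.hlam t (le_trans hk0 ht) i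
      nlinarith
    linarith
  have hX1 : Γ.X (t+1) i ≤ H - β * ε := by
    have h := Γ.X_next_le (le_trans hk0 ht) hSb hXt
    have h2 : Γ.X (t+1) i ≤ H - Γ.θ i * ε := by
      have hθ0 : 0 ≤ 1 - Γ.θ i := by linarith [Γ.theta_le_one i]
      nlinarith
    have := Γ.hθ1 i
    nlinarith
  have h := Γ.low_of_both hk0 hXH (t := t+1) (by omega)
    (mul_nonneg Γ.hβ0.le hε) hS1 hX1
  have heq1 : t + 1 + M = t + (M+1) := by omega
  have heq2 : β ^ M * (β * ε) = β ^ (M+1) * ε := by ring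
  rw [heq1, heq2] at h
  exact h

/-- a single low `X` value makes the node fully low `M+1` steps later. -/
lemma single_X_low (Γ : Sys n M β) {H : ℝ} {k0 : ℕ} (hk0 : M ≤ k0)
    (hSH : ∀ t, k0 ≤ t → ∀ i, Γ.S t i ≤ H)
    (hXH : ∀ l, k0 - M ≤ l → ∀ i, Γ.X l i ≤ H)
    {t : ℕ} (ht : k0 ≤ t) {i : Fin n} {ε : ℝ} (hε : 0 ≤ ε)
    (hXb : Γ.X t i ≤ H - ε) : Low Γ H (β ^ (M+1) * ε) (t + (M+1)) i := by
  have hSt : Γ.S t i ≤ H - 0 := by simpa using hSH t ht i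
  have hS1 : Γ.S (t+1) i ≤ H - β * ε := by
    have h := Γ.S_next_le hk0 hXH ht hSt hXb
    have hβdel : β * ε ≤ Γ.lam t i * 0 + Γ.del t i * ε := by
      have := Γ.hdel t (le_trans hk0 ht) i
      nlinarith
    linarith
  have hX1 : Γ.X (t+1) i ≤ H - β * ε := by
    have h := Γ.X_next_le (le_trans hk0 ht) hSt hXb
    have h2 : Γ.X (t+1) i ≤ H - (1 - Γ.θ i) * ε := by
      nlinarith [Γ.theta_nonneg i]
    have h3 : β ≤ 1 - Γ.θ i := by linarith [Γ.hθ2 i]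
    nlinarith
  have h := Γ.low_of_both hk0 hXH (t := t+1) (by omega)
    (mul_nonneg Γ.hβ0.le hε) hS1 hX1
  have heq1 : t + 1 + M = t + (M+1) := by omega
  have heq2 : β ^ M * (β * ε) = β ^ (M+1) * ε := by ring
  rw [heq1, heq2] at h
  exact h

/-- information flows along an active edge. -/
lemma edge_low (Γ : Sys n M β) {H : ℝ} {k0 : ℕ} (hk0 : M ≤ k0)
    (hSH : ∀ t, k0 ≤ t → ∀ i, Γ.S t i ≤ H)
    (hXH : ∀ l, k0 - M ≤ l → ∀ i, Γ.X l i ≤ H)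
    {t : ℕ} (ht : k0 ≤ t) {i j : Fin n} (hij : j ≠ i) (hwe : β ≤ Γ.w t i j)
    {ε : ℝ} (hε : 0 ≤ ε) (hl : Low Γ H ε t j) :
    Low Γ H (β ^ (M+2) * ε) (t + (M+2)) i := by
  have htM : M ≤ t := le_trans hk0 ht
  -- S (t+1) i is β ε low
  have hS1 : Γ.S (t+1) i ≤ H - β * ε := by
    rw [Γ.hS t htM i]
    have h1 : Γ.lam t i * Γ.S t i ≤ Γ.lam t i * H :=
      mul_le_mul_of_nonneg_left (hSH t ht i) (Γ.lam_nonneg htM i)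
    have h2 : Γ.del t i * Γ.X t i ≤ Γ.del t i * H :=
      mul_le_mul_of_nonneg_left (hXH t (by omega) i) (Γ.del_nonneg htM i)
    have hjmem : j ∈ Finset.univ.filter (fun j' => j' ≠ i) := by
      simp [hij]
    have h3 : ∑ j' ∈ Finset.univ.filter (fun j' => j' ≠ i), Γ.w t i j' * Γ.X (Γ.D t i j') j'
        ≤ (∑ j' ∈ Finset.univ.filter (fun j' => j' ≠ i), Γ.w t i j' * H) - β * ε := by
      have hsplit := Finset.sum_erase_add (Finset.univ.filter (fun j' => j' ≠ i))
        (fun j' => Γ.w t i j' * Γ.X (Γ.D t i j') j') hjmem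
      have hsplit2 := Finset.sum_erase_add (Finset.univ.filter (fun j' => j' ≠ i))
        (fun j' => Γ.w t i j' * H) hjmem
      rw [← hsplit, ← hsplit2]
      beta_reduce
      have hterm : Γ.w t i j * Γ.X (Γ.D t i j) j ≤ Γ.w t i j * H - β * ε := by
        have hDlow : Γ.X (Γ.D t i j) j ≤ H - ε :=
          hl.2 (Γ.D t i j) (by have := Γ.hD1 t htM i j; omega) (Γ.hD2 t htM i j)
        have hw0 : 0 ≤ Γ.w t i j := Γ.hw t i j
        nlinarith
      have hrest : ∑ j' ∈ (Finset.univ.filter (fun j' => j' ≠ i)).erase j,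
          Γ.w t i j' * Γ.X (Γ.D t i j') j'
          ≤ ∑ j' ∈ (Finset.univ.filter (fun j' => j' ≠ i)).erase j, Γ.w t i j' * H := by
        apply Finset.sum_le_sum
        intro j' _
        apply mul_le_mul_of_nonneg_left _ (Γ.hw t i j')
        apply hXH
        have := Γ.hD1 t htM i j'
        omega
      linarith
    have hsw : ∑ j' ∈ Finset.univ.filter (fun j' => j' ≠ i), Γ.w t i j' * H
        = (1 - Γ.lam t i - Γ.del t i) * H := by
      rw [← Finset.sum_mul, Γ.sum_w_eq htM i]
    rw [hsw] at h3
    linarith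
  have h := Γ.single_S_low hk0 hXH (t := t+1) (by omega)
    (mul_nonneg Γ.hβ0.le hε) hS1
  have heq1 : t + 1 + (M+1) = t + (M+2) := by omega
  have heq2 : β ^ (M+1) * (β * ε) = β ^ (M+2) * ε := by ring
  rw [heq1, heq2] at h
  exact h

/-! ### windowed max and min -/

noncomputable def Aup (Γ : Sys n M β) (hne : (Finset.univ : Finset (Fin n)).Nonempty)
    (k : ℕ) : ℝ :=
  Finset.univ.sup' hne (fun i => max (Γ.S k i)
    ((Finset.Icc (k - M) k).sup' (Finset.nonempty_Icc.mpr (Nat.sub_le k M)) (fun l => Γ.X l i)))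

noncomputable def mlow (Γ : Sys n M β) (hne : (Finset.univ : Finset (Fin n)).Nonempty)
    (k : ℕ) : ℝ :=
  - Aup Γ.neg hne k

variable {hne : (Finset.univ : Finset (Fin n)).Nonempty}

lemma S_le_Aup (Γ : Sys n M β) (k : ℕ) (i : Fin n) : Γ.S k i ≤ Aup Γ hne k := by
  have h := Finset.le_sup' (fun i => max (Γ.S k i)
    ((Finset.Icc (k - M) k).sup' (Finset.nonempty_Icc.mpr (Nat.sub_le k M))
      (fun l => Γ.X l i))) (Finset.mem_univ i)
  exact le_trans (le_max_left _ _) h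

lemma X_le_Aup (Γ : Sys n M β) {k l : ℕ} (h1 : k - M ≤ l) (h2 : l ≤ k) (i : Fin n) :
    Γ.X l i ≤ Aup Γ hne k := by
  have h := Finset.le_sup' (fun i => max (Γ.S k i)
    ((Finset.Icc (k - M) k).sup' (Finset.nonempty_Icc.mpr (Nat.sub_le k M))
      (fun l => Γ.X l i))) (Finset.mem_univ i)
  refine le_trans (le_trans ?_ (le_max_right (Γ.S k i) _)) h
  exact Finset.le_sup' (f := fun l => Γ.X l i) (Finset.mem_Icc.mpr ⟨h1, h2⟩)

lemma Aup_le (Γ : Sys n M β) {k : ℕ} {b : ℝ} (hS : ∀ i, Γ.S k i ≤ b)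
    (hX : ∀ l, k - M ≤ l → l ≤ k → ∀ i, Γ.X l i ≤ b) : Aup Γ hne k ≤ b := by
  unfold Aup
  apply Finset.sup'_le
  intro i _
  refine max_le (hS i) (Finset.sup'_le _ _ ?_)
  intro l hl
  rw [Finset.mem_Icc] at hl
  exact hX l hl.1 hl.2 i

lemma Aup_step (Γ : Sys n M β) {k : ℕ} (hk : M ≤ k) : Aup Γ hne (k+1) ≤ Aup Γ hne k := by
  apply Aup_le
  · intro i
    rw [Γ.hS k hk i]
    have h1 : Γ.lam k i * Γ.S k i ≤ Γ.lam k i * Aup Γ hne k :=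
      mul_le_mul_of_nonneg_left (Γ.S_le_Aup k i) (Γ.lam_nonneg hk i)
    have h2 : Γ.del k i * Γ.X k i ≤ Γ.del k i * Aup Γ hne k :=
      mul_le_mul_of_nonneg_left (Γ.X_le_Aup (Nat.sub_le k M) (le_refl k) i) (Γ.del_nonneg hk i)
    have h3 : ∑ j ∈ Finset.univ.filter (fun j => j ≠ i), Γ.w k i j * Γ.X (Γ.D k i j) j
        ≤ ∑ j ∈ Finset.univ.filter (fun j => j ≠ i), Γ.w k i j * Aup Γ hne k := by
      apply Finset.sum_le_sum
      intro j _
      exact mul_le_mul_of_nonneg_left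
        (Γ.X_le_Aup (Γ.hD1 k hk i j) (Γ.hD2 k hk i j) j) (Γ.hw k i j)
    rw [← Finset.sum_mul, Γ.sum_w_eq hk i] at h3
    nlinarith [Γ.hsum k hk i]
  · intro l h1 h2 i
    rcases Nat.lt_or_ge l (k+1) with h | h
    · exact Γ.X_le_Aup (by omega) (by omega) i
    · have : l = k + 1 := by omega
      subst this
      rw [Γ.hX k hk i]
      have hθ0 := Γ.theta_nonneg i
      have hθ1 := Γ.theta_le_one i
      nlinarith [Γ.S_le_Aup (hne := hne) k i, Γ.X_le_Aup (hne := hne) (Nat.sub_le k M) (le_refl k) i]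

lemma Aup_mono (Γ : Sys n M β) {k k' : ℕ} (hk : M ≤ k) (hkk : k ≤ k') :
    Aup Γ hne k' ≤ Aup Γ hne k := by
  obtain ⟨s, rfl⟩ := Nat.exists_eq_add_of_le hkk
  induction s with
  | zero => simp
  | succ s ih =>
    have : k + (s+1) = (k + s) + 1 := by omega
    rw [this]
    exact le_trans (Γ.Aup_step (by omega)) (ih (by omega))

/-- global upper bound for X from time `k0 - M` on. -/
lemma X_le_Aup_global (Γ : Sys n M β) {k0 : ℕ} (hk0 : M ≤ k0) {l : ℕ} (hl : k0 - M ≤ l)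
    (i : Fin n) : Γ.X l i ≤ Aup Γ hne k0 := by
  rcases Nat.lt_or_ge l k0 with h | h
  · exact Γ.X_le_Aup hl (by omega) i
  · exact le_trans (Γ.X_le_Aup (Nat.sub_le l M) (le_refl l) i) (Γ.Aup_mono hk0 h)

lemma S_le_Aup_global (Γ : Sys n M β) {k0 : ℕ} (hk0 : M ≤ k0) {t : ℕ} (ht : k0 ≤ t)
    (i : Fin n) : Γ.S t i ≤ Aup Γ hne k0 :=
  le_trans (Γ.S_le_Aup t i) (Γ.Aup_mono hk0 ht)

lemma mlow_le_S (Γ : Sys n M β) (k : ℕ) (i : Fin n) : mlow Γ hne k ≤ Γ.S k i := by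
  have := Γ.neg.S_le_Aup (hne := hne) k i
  show -Aup Γ.neg hne k ≤ Γ.S k i
  have hns : Γ.neg.S k i = - Γ.S k i := rfl
  rw [hns] at this
  linarith

lemma mlow_le_X (Γ : Sys n M β) {k l : ℕ} (h1 : k - M ≤ l) (h2 : l ≤ k) (i : Fin n) :
    mlow Γ hne k ≤ Γ.X l i := by
  have := Γ.neg.X_le_Aup (hne := hne) h1 h2 i
  show -Aup Γ.neg hne k ≤ Γ.X l i
  have hns : Γ.neg.X l i = - Γ.X l i := rfl
  rw [hns] at this
  linarith

lemma mlow_mono (Γ : Sys n M β) {k k' : ℕ} (hk : M ≤ k) (hkk : k ≤ k') :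
    mlow Γ hne k ≤ mlow Γ hne k' := by
  have := Γ.neg.Aup_mono (hne := hne) hk hkk
  show -Aup Γ.neg hne k ≤ -Aup Γ.neg hne k'
  linarith

lemma mlow_le_Aup (Γ : Sys n M β) (k : ℕ) : mlow Γ hne k ≤ Aup Γ hne k := by
  obtain ⟨i, _⟩ := hne
  exact le_trans (Γ.mlow_le_S k i) (Γ.S_le_Aup k i)

/-- crossing edge out of a set along a reflexive-transitive path. -/
lemma exists_crossing {E : Fin n → Fin n → Prop} {F : Finset (Fin n)} {root : Fin n}
    (hroot : root ∈ F) :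
    ∀ {y}, Relation.ReflTransGen E root y → y ∉ F →
      ∃ u v, u ∈ F ∧ v ∉ F ∧ E u v := by
  intro y hpath
  induction hpath with
  | refl => intro hy; exact absurd hroot hy
  | @tail b c hab hbc ih =>
    intro hc
    by_cases hb : b ∈ F
    · exact ⟨b, c, hb, hc, hbc⟩
    · exact ih hb
theorem span_contraction (Γ : Sys n M β) (P L : ℕ)
    (hL : L = 2*M+1 + n*(P+M+2))
    (hconn : ∀ t, M ≤ t → ∃ root : Fin n, ∀ i : Fin n,
      Relation.ReflTransGen (fun u v => ∃ k, t ≤ k ∧ k < t + P ∧ u ≠ v ∧ β ≤ Γ.w k v u) root i)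
    {k0 : ℕ} (hk0 : M ≤ k0) :
    Aup Γ hne (k0+L) - mlow Γ hne (k0+L)
      ≤ (1 - β^L/2) * (Aup Γ hne k0 - mlow Γ hne k0) := by
  classical
  set H := Aup Γ hne k0 with hHdef
  set h := mlow Γ hne k0 with hhdef
  have hΔ : h ≤ H := Γ.mlow_le_Aup k0
  set ε0 := (H - h)/2 with hε0def
  have hε0 : 0 ≤ ε0 := by simp only [hε0def]; linarith
  have hβpos := Γ.hβ0
  have hβle1 : β ≤ 1 := by linarith [Γ.hβ2]
  have hpow0 : ∀ a : ℕ, (0:ℝ) ≤ β ^ a := fun a => pow_nonneg hβpos.le a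
  have hpow1 : ∀ a : ℕ, β ^ a ≤ 1 := fun a => pow_le_one₀ hβpos.le hβle1
  have hpowmul : ∀ (a b : ℕ) (x : ℝ), β ^ a * (β ^ b * x) = β ^ (a+b) * x := by
    intro a b x; rw [pow_add]; ring
  have hpow_anti : ∀ {a b : ℕ}, a ≤ b → β ^ b ≤ β ^ a :=
    fun hab => pow_le_pow_of_le_one hβpos.le hβle1 hab
  -- global bounds
  have hXH : ∀ l, k0 - M ≤ l → ∀ i, Γ.X l i ≤ H := fun l hl i => Γ.X_le_Aup_global hk0 hl i
  have hSH : ∀ t, k0 ≤ t → ∀ i, Γ.S t i ≤ H := fun t ht i => Γ.S_le_Aup_global hk0 ht i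
  have hnegH : -h = Aup Γ.neg hne k0 := by simp only [hhdef, mlow, neg_neg]
  have hXHn : ∀ l, k0 - M ≤ l → ∀ i, Γ.neg.X l i ≤ -h := by
    intro l hl i; rw [hnegH]; exact Γ.neg.X_le_Aup_global hk0 hl i
  have hSHn : ∀ t, k0 ≤ t → ∀ i, Γ.neg.S t i ≤ -h := by
    intro t ht i; rw [hnegH]; exact Γ.neg.S_le_Aup_global hk0 ht i
  -- dichotomy at time k0 + (2M+1)
  have hmid : h + ε0 = H - ε0 := by simp only [hε0def]; ring
  have dich : ∀ i, Low Γ H (β^(2*M+1) * ε0) (k0 + (2*M+1)) i ∨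
      Low Γ.neg (-h) (β^(2*M+1) * ε0) (k0 + (2*M+1)) i := by
    intro i
    by_cases hc : Γ.S (k0+M) i ≤ h + ε0 ∨ ∃ l, k0 ≤ l ∧ l ≤ k0 + M ∧ Γ.X l i ≤ h + ε0
    · left
      rcases hc with hS | ⟨l, hl1, hl2, hX⟩
      · have hlow := Γ.single_S_low hk0 hXH (t := k0+M) (by omega) hε0
          (by rw [hmid] at hS; exact hS)
        have htt : k0 + M + (M+1) = k0 + (2*M+1) := by omega
        rw [htt] at hlow
        exact Γ.low_mono (by nlinarith [hpow_anti (show M+1 ≤ 2*M+1 by omega)]) hlow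
      · have hlow := Γ.single_X_low hk0 hSH hXH (t := l) hl1 hε0 (by rw [hmid] at hX; exact hX)
        have hper := Γ.low_persist hk0 hXH (t := l+(M+1)) (by omega)
          (mul_nonneg (hpow0 _) hε0) hlow (k0+M-l)
        have htt : l + (M+1) + (k0+M-l) = k0 + (2*M+1) := by omega
        rw [htt, hpowmul] at hper
        exact Γ.low_mono (by nlinarith [hpow_anti (show k0+M-l+(M+1) ≤ 2*M+1 by omega)]) hper
    · push_neg at hc
      right
      have hlow : Low Γ.neg (-h) ε0 (k0+M) i := by
        constructor
        · show -Γ.S (k0+M) i ≤ -h - ε0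
          have := hc.1; linarith
        · intro l h1 h2
          show -Γ.X l i ≤ -h - ε0
          have := hc.2 l (by omega) h2
          linarith
      have hper := Γ.neg.low_persist hk0 hXHn (t := k0+M) (by omega) hε0 hlow (M+1)
      have htt : k0 + M + (M+1) = k0 + (2*M+1) := by omega
      rw [htt] at hper
      exact Γ.neg.low_mono (by nlinarith [hpow_anti (show M+1 ≤ 2*M+1 by omega)]) hper
  -- staged propagation
  set t1 := k0 + (2*M+1) with ht1def
  have hfin : t1 + n*(P+M+2) = k0 + L := by rw [hL, ht1def]; ring
  have hκ0 : ∀ s : ℕ, (0:ℝ) ≤ β ^ (2*M+1 + s*(P+M+2)) * ε0 :=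
    fun s => mul_nonneg (hpow0 _) hε0
  have stages : ∀ s, s ≤ n →
      (∀ i, Low Γ H (β^L * ε0) (k0+L) i) ∨ (∀ i, Low Γ.neg (-h) (β^L * ε0) (k0+L) i) ∨
      (∃ F G : Finset (Fin n),
        (∀ i ∈ F, Low Γ H (β ^ (2*M+1 + s*(P+M+2)) * ε0) (t1 + s*(P+M+2)) i) ∧
        (∀ i ∈ G, Low Γ.neg (-h) (β ^ (2*M+1 + s*(P+M+2)) * ε0) (t1 + s*(P+M+2)) i) ∧
        (∀ i, i ∈ F ∨ i ∈ G) ∧ n + s ≤ F.card + G.card) := by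
    intro s
    induction s with
    | zero =>
      intro _
      right; right
      have hcov0 : ∀ i : Fin n,
          i ∈ Finset.univ.filter (fun i => Low Γ H (β^(2*M+1) * ε0) t1 i) ∨
          i ∈ Finset.univ.filter (fun i => Low Γ.neg (-h) (β^(2*M+1) * ε0) t1 i) := by
        intro i
        rcases dich i with hd | hd
        · left
          rw [Finset.mem_filter]
          exact ⟨Finset.mem_univ i, hd⟩
        · right
          rw [Finset.mem_filter]
          exact ⟨Finset.mem_univ i, hd⟩
      refine ⟨Finset.univ.filter (fun i => Low Γ H (β^(2*M+1) * ε0) t1 i),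
        Finset.univ.filter (fun i => Low Γ.neg (-h) (β^(2*M+1) * ε0) t1 i),
        ?_, ?_, hcov0, ?_⟩
      · intro i hi
        rw [Finset.mem_filter] at hi
        have := hi.2
        simpa using this
      · intro i hi
        rw [Finset.mem_filter] at hi
        have := hi.2
        simpa using this
      · have hsub : (Finset.univ : Finset (Fin n)) ⊆
            Finset.univ.filter (fun i => Low Γ H (β^(2*M+1) * ε0) t1 i) ∪
            Finset.univ.filter (fun i => Low Γ.neg (-h) (β^(2*M+1) * ε0) t1 i) := by
          intro i _
          rcases hcov0 i with hx | hx
          · exact Finset.mem_union_left _ hx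
          · exact Finset.mem_union_right _ hx
        have h1 := le_trans (Finset.card_le_card hsub) (Finset.card_union_le _ _)
        simpa using h1
    | succ s ih =>
      intro hs1
      rcases ih (by omega) with hdone | hdone | ⟨F, G, hF, hG, hcov, hcard⟩
      · exact Or.inl hdone
      · exact Or.inr (Or.inl hdone)
      have htsk0 : k0 ≤ t1 + s*(P+M+2) := by omega
      have htsM : M ≤ t1 + s*(P+M+2) := by omega
      have htnext : t1 + s*(P+M+2) + (P+M+2) = t1 + (s+1)*(P+M+2) := by ring
      have hκnext : ∀ x : ℝ, β ^ (P+M+2) * (β ^ (2*M+1 + s*(P+M+2)) * x)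
          = β ^ (2*M+1 + (s+1)*(P+M+2)) * x := by
        intro x
        rw [hpowmul]
        congr 2
        ring
      by_cases hFu : F = Finset.univ
      · left
        intro i
        have hl := hF i (by rw [hFu]; exact Finset.mem_univ i)
        have hper := Γ.low_persist hk0 hXH htsk0 (hκ0 s) hl ((n-s)*(P+M+2))
        have htt : t1 + s*(P+M+2) + (n-s)*(P+M+2) = k0 + L := by
          rw [← hfin]
          have : s*(P+M+2) + (n-s)*(P+M+2) = n*(P+M+2) := by
            rw [← Nat.add_mul]; congr 1; omega
          omega
        have hee : β ^ ((n-s)*(P+M+2)) * (β ^ (2*M+1 + s*(P+M+2)) * ε0) = β ^ L * ε0 := by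
          rw [hpowmul]
          congr 2
          rw [hL]
          have : (n-s)*(P+M+2) + s*(P+M+2) = n*(P+M+2) := by
            rw [← Nat.add_mul]; congr 1; omega
          omega
        rw [htt, hee] at hper
        exact hper
      by_cases hGu : G = Finset.univ
      · right; left
        intro i
        have hl := hG i (by rw [hGu]; exact Finset.mem_univ i)
        have hper := Γ.neg.low_persist hk0 hXHn htsk0 (hκ0 s) hl ((n-s)*(P+M+2))
        have htt : t1 + s*(P+M+2) + (n-s)*(P+M+2) = k0 + L := by
          rw [← hfin]
          have : s*(P+M+2) + (n-s)*(P+M+2) = n*(P+M+2) := by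
            rw [← Nat.add_mul]; congr 1; omega
          omega
        have hee : β ^ ((n-s)*(P+M+2)) * (β ^ (2*M+1 + s*(P+M+2)) * ε0) = β ^ L * ε0 := by
          rw [hpowmul]
          congr 2
          rw [hL]
          have : (n-s)*(P+M+2) + s*(P+M+2) = n*(P+M+2) := by
            rw [← Nat.add_mul]; congr 1; omega
          omega
        rw [htt, hee] at hper
        exact hper
      -- grow one of the sets
      obtain ⟨root, hroot⟩ := hconn (t1 + s*(P+M+2)) htsM
      right; right
      rcases hcov root with hrF | hrG
      · -- grow F
        obtain ⟨i0, hi0⟩ : ∃ i, i ∉ F := by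
          by_contra hno; push_neg at hno
          exact hFu (Finset.eq_univ_iff_forall.mpr hno)
        obtain ⟨u, v, huF, hvF, hE⟩ := exists_crossing hrF (hroot i0) hi0
        obtain ⟨kh, hk1, hk2, huv, hwe⟩ := hE
        have hu2 := Γ.low_persist hk0 hXH htsk0 (hκ0 s) (hF u huF) (kh - (t1 + s*(P+M+2)))
        have htu : t1 + s*(P+M+2) + (kh - (t1 + s*(P+M+2))) = kh := by omega
        rw [htu] at hu2
        have hv2 := Γ.edge_low hk0 hSH hXH (t := kh) (by omega) huv hwe
          (mul_nonneg (hpow0 _) (hκ0 s)) hu2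
        have hv3 := Γ.low_persist hk0 hXH (t := kh + (M+2)) (by omega)
          (by positivity) hv2 (t1 + (s+1)*(P+M+2) - (kh + (M+2)))
        have htv : kh + (M+2) + (t1 + (s+1)*(P+M+2) - (kh + (M+2)))
            = t1 + (s+1)*(P+M+2) := by
          have : t1 + (s+1)*(P+M+2) = t1 + s*(P+M+2) + (P+M+2) := by ring
          omega
        rw [htv] at hv3
        have hεv : β ^ (t1 + (s+1)*(P+M+2) - (kh + (M+2))) *
            (β ^ (M+2) * (β ^ (kh - (t1 + s*(P+M+2))) * (β ^ (2*M+1 + s*(P+M+2)) * ε0)))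
            = β ^ (2*M+1 + (s+1)*(P+M+2)) * ε0 := by
          rw [hpowmul, hpowmul, hpowmul]
          congr 2
          have h1 : t1 + (s+1)*(P+M+2) = t1 + s*(P+M+2) + (P+M+2) := by ring
          omega
        rw [hεv] at hv3
        refine ⟨insert v F, G, ?_, ?_, ?_, ?_⟩
        · intro i hi
          rcases Finset.mem_insert.mp hi with rfl | hiF
          · exact hv3
          · have hper := Γ.low_persist hk0 hXH htsk0 (hκ0 s) (hF i hiF) (P+M+2)
            rw [htnext, hκnext] at hper
            exact hper
        · intro i hi
          have hper := Γ.neg.low_persist hk0 hXHn htsk0 (hκ0 s) (hG i hi) (P+M+2)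
          rw [htnext, hκnext] at hper
          exact hper
        · intro i
          rcases hcov i with hx | hx
          · exact Or.inl (Finset.mem_insert_of_mem hx)
          · exact Or.inr hx
        · rw [Finset.card_insert_of_notMem hvF]
          omega
      · -- grow G
        obtain ⟨i0, hi0⟩ : ∃ i, i ∉ G := by
          by_contra hno; push_neg at hno
          exact hGu (Finset.eq_univ_iff_forall.mpr hno)
        obtain ⟨u, v, huG, hvG, hE⟩ := exists_crossing hrG (hroot i0) hi0
        obtain ⟨kh, hk1, hk2, huv, hwe⟩ := hE
        have hu2 := Γ.neg.low_persist hk0 hXHn htsk0 (hκ0 s) (hG u huG) (kh - (t1 + s*(P+M+2)))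
        have htu : t1 + s*(P+M+2) + (kh - (t1 + s*(P+M+2))) = kh := by omega
        rw [htu] at hu2
        have hwe' : β ≤ Γ.neg.w kh v u := hwe
        have hv2 := Γ.neg.edge_low hk0 hSHn hXHn (t := kh) (by omega) huv hwe'
          (mul_nonneg (hpow0 _) (hκ0 s)) hu2
        have hv3 := Γ.neg.low_persist hk0 hXHn (t := kh + (M+2)) (by omega)
          (by positivity) hv2 (t1 + (s+1)*(P+M+2) - (kh + (M+2)))
        have htv : kh + (M+2) + (t1 + (s+1)*(P+M+2) - (kh + (M+2)))
            = t1 + (s+1)*(P+M+2) := by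
          have : t1 + (s+1)*(P+M+2) = t1 + s*(P+M+2) + (P+M+2) := by ring
          omega
        rw [htv] at hv3
        have hεv : β ^ (t1 + (s+1)*(P+M+2) - (kh + (M+2))) *
            (β ^ (M+2) * (β ^ (kh - (t1 + s*(P+M+2))) * (β ^ (2*M+1 + s*(P+M+2)) * ε0)))
            = β ^ (2*M+1 + (s+1)*(P+M+2)) * ε0 := by
          rw [hpowmul, hpowmul, hpowmul]
          congr 2
          have h1 : t1 + (s+1)*(P+M+2) = t1 + s*(P+M+2) + (P+M+2) := by ring
          omega
        rw [hεv] at hv3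
        refine ⟨F, insert v G, ?_, ?_, ?_, ?_⟩
        · intro i hi
          have hper := Γ.low_persist hk0 hXH htsk0 (hκ0 s) (hF i hi) (P+M+2)
          rw [htnext, hκnext] at hper
          exact hper
        · intro i hi
          rcases Finset.mem_insert.mp hi with rfl | hiG
          · exact hv3
          · have hper := Γ.neg.low_persist hk0 hXHn htsk0 (hκ0 s) (hG i hiG) (P+M+2)
            rw [htnext, hκnext] at hper
            exact hper
        · intro i
          rcases hcov i with hx | hx
          · exact Or.inl hx
          · exact Or.inr (Finset.mem_insert_of_mem hx)
        · rw [Finset.card_insert_of_notMem hvG]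
          omega
  -- conclude
  have final : (∀ i, Low Γ H (β^L * ε0) (k0+L) i) ∨
      (∀ i, Low Γ.neg (-h) (β^L * ε0) (k0+L) i) := by
    rcases stages n (le_refl n) with hd | hd | ⟨F, G, hF, hG, hcov, hcard⟩
    · exact Or.inl hd
    · exact Or.inr hd
    · have hFcard : F.card ≤ n := le_trans (Finset.card_le_card (Finset.subset_univ F))
        (by simp)
      have hGcard : G.card ≤ n := le_trans (Finset.card_le_card (Finset.subset_univ G))
        (by simp)
      have hFeq : F = Finset.univ := by
        apply Finset.eq_univ_of_card
        have : n ≤ F.card := by omega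
        have : F.card = n := by omega
        simpa using this
      left
      intro i
      have hl := hF i (by rw [hFeq]; exact Finset.mem_univ i)
      have hee : β ^ (2*M+1 + n*(P+M+2)) * ε0 = β ^ L * ε0 := by rw [hL]
      rw [hfin, hee] at hl
      exact hl
  have hspan_e : β ^ L * ε0 = β ^ L * (H - h) / 2 := by rw [hε0def]; ring
  rcases final with hd | hd
  · have hA : Aup Γ hne (k0+L) ≤ H - β^L * ε0 := by
      apply Aup_le
      · intro i; exact (hd i).1
      · intro l h1 h2 i; exact (hd i).2 l h1 h2
    have hm : h ≤ mlow Γ hne (k0+L) := Γ.mlow_mono hk0 (by omega)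
    rw [hspan_e] at hA
    linarith
  · have hA : Aup Γ.neg hne (k0+L) ≤ -h - β^L * ε0 := by
      apply Aup_le
      · intro i; exact (hd i).1
      · intro l h1 h2 i; exact (hd i).2 l h1 h2
    have hm : mlow Γ hne (k0+L) = - Aup Γ.neg hne (k0+L) := rfl
    have hA2 : Aup Γ hne (k0+L) ≤ H := Γ.Aup_mono hk0 (by omega)
    rw [hspan_e] at hA
    rw [hm]
    linarith

lemma bounded_above (Γ : Sys n M β) {b : ℝ} (hS0 : ∀ i, Γ.S M i ≤ b)
    (hX0 : ∀ l, l ≤ M → ∀ i, Γ.X l i ≤ b) :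
    (∀ l i, Γ.X l i ≤ b) ∧ (∀ t, M ≤ t → ∀ i, Γ.S t i ≤ b) := by
  have key : ∀ s, (∀ i, Γ.S (M+s) i ≤ b) ∧ (∀ l, l ≤ M+s → ∀ i, Γ.X l i ≤ b) := by
    intro s
    induction s with
    | zero => exact ⟨hS0, fun l hl i => hX0 l (by omega) i⟩
    | succ s ih =>
      have hMs : M ≤ M + s := by omega
      have hstep : ∀ i, Γ.S (M+s+1) i ≤ b := by
        intro i
        rw [Γ.hS (M+s) hMs i]
        have h1 : Γ.lam (M+s) i * Γ.S (M+s) i ≤ Γ.lam (M+s) i * b :=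
          mul_le_mul_of_nonneg_left (ih.1 i) (Γ.lam_nonneg hMs i)
        have h2 : Γ.del (M+s) i * Γ.X (M+s) i ≤ Γ.del (M+s) i * b :=
          mul_le_mul_of_nonneg_left (ih.2 (M+s) (by omega) i) (Γ.del_nonneg hMs i)
        have h3 : ∑ j ∈ Finset.univ.filter (fun j => j ≠ i),
            Γ.w (M+s) i j * Γ.X (Γ.D (M+s) i j) j
            ≤ ∑ j ∈ Finset.univ.filter (fun j => j ≠ i), Γ.w (M+s) i j * b := by
          apply Finset.sum_le_sum
          intro j _
          exact mul_le_mul_of_nonneg_left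
            (ih.2 (Γ.D (M+s) i j) (Γ.hD2 (M+s) hMs i j) j) (Γ.hw (M+s) i j)
        rw [← Finset.sum_mul, Γ.sum_w_eq hMs i] at h3
        nlinarith [Γ.hsum (M+s) hMs i]
      have hXstep : ∀ i, Γ.X (M+s+1) i ≤ b := by
        intro i
        rw [Γ.hX (M+s) hMs i]
        have hθ0 := Γ.theta_nonneg i
        have hθ1 := Γ.theta_le_one i
        nlinarith [ih.1 i, ih.2 (M+s) (by omega) i]
      refine ⟨?_, ?_⟩
      · intro i
        have : M + (s+1) = M + s + 1 := by omega
        rw [this]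
        exact hstep i
      · intro l hl i
        rcases Nat.lt_or_ge l (M+s+1) with hlt | hge
        · exact ih.2 l (by omega) i
        · have : l = M+s+1 := by omega
          subst this
          exact hXstep i
  constructor
  · intro l i
    exact (key l).2 l (by omega) i
  · intro t ht i
    obtain ⟨s, rfl⟩ := Nat.exists_eq_add_of_le ht
    exact (key s).1 i

end Sys

/-- decay base used in the abstract consensus theorem. -/
noncomputable def qval (β : ℝ) (L : ℕ) : ℝ := (1 - β ^ L / 2) ^ ((L : ℝ)⁻¹)

lemma qval_nonneg {β : ℝ} (hβ0 : 0 < β) (hβ2 : β ≤ 1/2) (L : ℕ) : 0 ≤ qval β L := by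
  apply Real.rpow_nonneg
  have h1 : β ^ L ≤ 1 := pow_le_one₀ hβ0.le (by linarith)
  linarith

lemma qval_lt_one {β : ℝ} (hβ0 : 0 < β) (hβ2 : β ≤ 1/2) {L : ℕ} (hL : 1 ≤ L) :
    qval β L < 1 := by
  have h1 : β ^ L ≤ 1 := pow_le_one₀ hβ0.le (by linarith)
  have h2 : 0 < β ^ L := pow_pos hβ0 L
  apply Real.rpow_lt_one (by linarith) (by linarith)
  have : (0:ℝ) < (L:ℝ) := by exact_mod_cast hL
  positivity

namespace Sys

theorem consensus (Γ : Sys n M β) (hne : (Finset.univ : Finset (Fin n)).Nonempty)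
    (P L : ℕ) (hL : L = 2*M+1 + n*(P+M+2))
    (hconn : ∀ t, M ≤ t → ∃ root : Fin n, ∀ i : Fin n,
      Relation.ReflTransGen (fun u v => ∃ k, t ≤ k ∧ k < t + P ∧ u ≠ v ∧ β ≤ Γ.w k v u) root i) :
    ∃ zbar C : ℝ, 0 ≤ C ∧ (∀ k i, |Γ.X k i - zbar| ≤ C * qval β L ^ k) ∧
      (∀ k, M ≤ k → ∀ i, |Γ.S k i - zbar| ≤ C * qval β L ^ k) := by
  classical
  have hβ0 := Γ.hβ0
  have hβ2 := Γ.hβ2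
  have hL1 : 1 ≤ L := by omega
  have hL0 : 0 < L := hL1
  set γ := 1 - β ^ L / 2 with hγdef
  have hβL1 : β ^ L ≤ 1 := pow_le_one₀ hβ0.le (by linarith)
  have hβL0 : 0 < β ^ L := pow_pos hβ0 L
  have hγ0 : 0 < γ := by simp only [hγdef]; linarith
  have hγ1 : γ < 1 := by simp only [hγdef]; linarith
  set q := qval β L with hqdef
  have hq0 : 0 ≤ q := qval_nonneg hβ0 hβ2 L
  have hq1 : q < 1 := qval_lt_one hβ0 hβ2 hL1
  -- span and its properties
  set span : ℕ → ℝ := fun k => Aup Γ hne k - mlow Γ hne k with hspandef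
  have hspan0 : ∀ k, 0 ≤ span k := fun k => by
    simp only [hspandef]; linarith [Γ.mlow_le_Aup (hne := hne) k]
  have hspan_mono : ∀ k k', M ≤ k → k ≤ k' → span k' ≤ span k := by
    intro k k' hk hkk
    simp only [hspandef]
    have h1 := Γ.Aup_mono (hne := hne) hk hkk
    have h2 := Γ.mlow_mono (hne := hne) hk hkk
    linarith
  have hrec : ∀ j : ℕ, span (M + j*L) ≤ γ ^ j * span M := by
    intro j
    induction j with
    | zero => simp
    | succ j ih =>
      have hstep := Γ.span_contraction (hne := hne) P L hL hconn (k0 := M + j*L) (by omega)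
      have heq : M + j*L + L = M + (j+1)*L := by ring
      rw [heq] at hstep
      calc span (M + (j+1)*L) ≤ γ * span (M + j*L) := hstep
      _ ≤ γ * (γ ^ j * span M) := mul_le_mul_of_nonneg_left ih hγ0.le
      _ = γ ^ (j+1) * span M := by ring
  -- pow / rpow conversions
  have hqpow : ∀ k : ℕ, q ^ k = γ ^ ((L:ℝ)⁻¹ * k) := by
    intro k
    rw [hqdef, qval, ← hγdef, ← Real.rpow_natCast (γ ^ ((L:ℝ)⁻¹)) k, ← Real.rpow_mul hγ0.le]
  have hγpow : ∀ j : ℕ, γ ^ j = γ ^ ((j:ℕ) : ℝ) := fun j => (Real.rpow_natCast γ j).symm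
  set CC := span M * γ ^ (-(M:ℝ)/L - 1) with hCCdef
  have hCC0 : 0 ≤ CC := mul_nonneg (hspan0 M) (Real.rpow_nonneg hγ0.le _)
  have hmain : ∀ k, M ≤ k → span k ≤ CC * q ^ k := by
    intro k hk
    obtain ⟨j, hj1, hjlt⟩ : ∃ j : ℕ, j*L ≤ k - M ∧ k - M < j*L + L := by
      refine ⟨(k-M)/L, Nat.div_mul_le_self _ _, ?_⟩
      have h1 : (k-M) % L + (k-M)/L * L = k - M := Nat.mod_add_div' (k-M) L
      have h2 := Nat.mod_lt (k - M) hL0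
      omega
    have hjk : M + j*L ≤ k := by omega
    have h1 : span k ≤ γ ^ j * span M :=
      le_trans (hspan_mono _ _ (by omega) hjk) (hrec j)
    have hexp : ((k:ℝ)/L - (M:ℝ)/L - 1) ≤ (j:ℝ) := by
      have hL0' : (0:ℝ) < (L:ℝ) := by exact_mod_cast hL0
      rw [div_sub_div_same, sub_le_iff_le_add, div_le_iff₀ hL0']
      have : (k:ℝ) - (M:ℝ) ≤ (j:ℝ)*L + L := by
        have : (k - M : ℕ) ≤ j*L + L := by omega
        have h2 : ((k - M : ℕ) : ℝ) = (k:ℝ) - (M:ℝ) := by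
          push_cast [Nat.cast_sub hk]; ring
        calc (k:ℝ) - (M:ℝ) = ((k - M : ℕ) : ℝ) := h2.symm
        _ ≤ ((j*L + L : ℕ) : ℝ) := by exact_mod_cast this
        _ = (j:ℝ)*L + L := by push_cast; ring
      linarith
    have h2 : γ ^ j ≤ γ ^ ((k:ℝ)/L - (M:ℝ)/L - 1) := by
      rw [hγpow j]
      exact Real.rpow_le_rpow_of_exponent_ge hγ0 hγ1.le hexp
    have h3 : γ ^ ((k:ℝ)/L - (M:ℝ)/L - 1) = γ ^ (-(M:ℝ)/L - 1) * q ^ k := by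
      rw [hqpow k, ← Real.rpow_add hγ0]
      congr 1
      field_simp
      ring
    have h4 : γ ^ j * span M ≤ CC * q ^ k := by
      rw [hCCdef]
      calc γ ^ j * span M ≤ γ ^ ((k:ℝ)/L - (M:ℝ)/L - 1) * span M :=
        mul_le_mul_of_nonneg_right h2 (hspan0 M)
      _ = span M * γ ^ (-(M:ℝ)/L - 1) * q ^ k := by rw [h3]; ring
    linarith
  -- small k case: span M ≤ CC * q ^ k for k ≤ M
  have hsmall : ∀ k, k ≤ M → span M ≤ CC * q ^ k := by
    intro k hk
    have hqM : q ^ M ≤ q ^ k := pow_le_pow_of_le_one hq0 hq1.le hk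
    have hCCqM : CC * q ^ M = span M * γ⁻¹ := by
      rw [hCCdef, hqpow M, mul_assoc, ← Real.rpow_add hγ0]
      have heq2 : -(M:ℝ)/L - 1 + (L:ℝ)⁻¹ * M = -1 := by
        have hL0' : ((L:ℕ):ℝ) ≠ 0 := by positivity
        field_simp
        ring
      rw [heq2, Real.rpow_neg_one]
    have hγinv : 1 ≤ γ⁻¹ := by
      have hmm : γ * γ⁻¹ = 1 := mul_inv_cancel₀ hγ0.ne'
      nlinarith
    have h5 : span M ≤ CC * q ^ M := by
      rw [hCCqM]
      calc span M = span M * 1 := by ring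
      _ ≤ span M * γ⁻¹ := mul_le_mul_of_nonneg_left hγinv (hspan0 M)
    calc span M ≤ CC * q ^ M := h5
    _ ≤ CC * q ^ k := mul_le_mul_of_nonneg_left hqM hCC0
  -- the limit point
  have hbdd : BddAbove (Set.range fun j : ℕ => mlow Γ hne (M + j)) := by
    refine ⟨Aup Γ hne M, ?_⟩
    rintro x ⟨j, rfl⟩
    exact le_trans (Γ.mlow_le_Aup (M+j)) (Γ.Aup_mono (by omega) (by omega))
  set zbar := ⨆ j : ℕ, mlow Γ hne (M + j) with hzdef
  have hz1 : ∀ k, M ≤ k → mlow Γ hne k ≤ zbar := by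
    intro k hk
    have := le_ciSup hbdd (k - M)
    have heq : M + (k - M) = k := by omega
    rw [heq] at this
    exact this
  have hz2 : ∀ k, M ≤ k → zbar ≤ Aup Γ hne k := by
    intro k hk
    apply ciSup_le
    intro j
    calc mlow Γ hne (M + j) ≤ mlow Γ hne (max (M+j) k) :=
      Γ.mlow_mono (by omega) (le_max_left _ _)
    _ ≤ Aup Γ hne (max (M+j) k) := Γ.mlow_le_Aup _
    _ ≤ Aup Γ hne k := Γ.Aup_mono hk (le_max_right _ _)
  refine ⟨zbar, CC, hCC0, ?_, ?_⟩
  · intro k i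
    rcases Nat.lt_or_ge k M with hkM | hkM
    · have hup : Γ.X k i ≤ Aup Γ hne M := Γ.X_le_Aup (by omega) (by omega) i
      have hlo : mlow Γ hne M ≤ Γ.X k i := Γ.mlow_le_X (by omega) (by omega) i
      have hzu := hz2 M (le_refl M)
      have hzl := hz1 M (le_refl M)
      rw [abs_le]
      have := hsmall k (by omega)
      constructor
      · simp only [hspandef] at this
        linarith
      · simp only [hspandef] at this
        linarith
    · have hup : Γ.X k i ≤ Aup Γ hne k := Γ.X_le_Aup (Nat.sub_le k M) (le_refl k) i
      have hlo : mlow Γ hne k ≤ Γ.X k i := Γ.mlow_le_X (Nat.sub_le k M) (le_refl k) i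
      have hzu := hz2 k hkM
      have hzl := hz1 k hkM
      have := hmain k hkM
      simp only [hspandef] at this
      rw [abs_le]
      constructor <;> linarith
  · intro k hk i
    have hup : Γ.S k i ≤ Aup Γ hne k := Γ.S_le_Aup k i
    have hlo : mlow Γ hne k ≤ Γ.S k i := Γ.mlow_le_S k i
    have hzu := hz2 k hk
    have hzl := hz1 k hk
    have := hmain k hk
    simp only [hspandef] at this
    rw [abs_le]
    constructor <;> linarith

end Sys

section Helpers

lemma euclid_abs_coord_le {r : ℕ} (z : EuclideanSpace ℝ (Fin r)) (l : Fin r) :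
    |z l| ≤ ‖z‖ := by
  rw [EuclideanSpace.norm_eq]
  rw [← Real.sqrt_sq_eq_abs]
  apply Real.sqrt_le_sqrt
  have : |z l| ^ 2 ≤ ∑ i, ‖z i‖ ^ 2 := by
    have := Finset.single_le_sum (f := fun i => ‖z i‖ ^ 2)
      (fun i _ => by positivity) (Finset.mem_univ l)
    simpa [Real.norm_eq_abs, sq_abs] using this
  simpa [sq_abs] using this

lemma euclid_norm_le_sum {r : ℕ} (z : EuclideanSpace ℝ (Fin r)) :
    ‖z‖ ≤ ∑ l, |z l| := by
  rw [EuclideanSpace.norm_eq]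
  have h1 : ∑ i, ‖z i‖ ^ 2 ≤ (∑ l, |z l|) ^ 2 := by
    have h2 : ∀ i ∈ Finset.univ, ‖z i‖ ^ 2 ≤ |z i| * ∑ l, |z l| := by
      intro i _
      have h3 : |z i| ≤ ∑ l, |z l| :=
        Finset.single_le_sum (f := fun l => |z l|) (fun l _ => abs_nonneg _) (Finset.mem_univ i)
      have : ‖z i‖ = |z i| := rfl
      rw [this, sq]
      exact mul_le_mul_of_nonneg_left h3 (abs_nonneg _)
    calc ∑ i, ‖z i‖ ^ 2 ≤ ∑ i, |z i| * ∑ l, |z l| := Finset.sum_le_sum h2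
    _ = (∑ l, |z l|) ^ 2 := by rw [← Finset.sum_mul, sq]
  calc Real.sqrt (∑ i, ‖z i‖ ^ 2) ≤ Real.sqrt ((∑ l, |z l|) ^ 2) := Real.sqrt_le_sqrt h1
  _ = ∑ l, |z l| := Real.sqrt_sq (Finset.sum_nonneg fun l _ => abs_nonneg _)

end Helpers

section Builder

/-- Builder for the per-coordinate abstract system from the closed loop. -/
noncomputable def mkSys (n r M : ℕ) (T : ℝ) (β' : ℝ)
    (x v : ℤ → Fin n → EuclideanSpace ℝ (Fin r))
    (e p : ℕ → Fin n → ℝ) (a : ℕ → Fin n → Fin n → ℝ) (τ : ℕ → Fin n → Fin n → ℕ)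
    (l : Fin r)
    (hT : 0 < T) (hp0 : ∀ i, 0 < p 0 i)
    (hβ'0 : 0 < β') (hβ'2 : β' ≤ 1/2)
    (hθa : ∀ i, β' ≤ T * p 0 i / 2)
    (hθb : ∀ i, T * p 0 i / 2 ≤ 1 - β')
    (he0 : ∀ k i, 0 ≤ e k i)
    (ha0 : ∀ k i j, 0 ≤ a k i j)
    (hpT1 : ∀ k i, p k i * T ≤ 1)
    (hτM : ∀ k i j, τ k i j ≤ M)
    (hlamb : ∀ k i, M ≤ k →
      β' ≤ T * p 0 i / 2 + e (k-M) i * (1 - p (k-M) i * T))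
    (hdelb : ∀ k i, M ≤ k →
      β' ≤ 1 - (T * p 0 i / 2 + e (k-M) i * (1 - p (k-M) i * T))
        - ∑ j ∈ Finset.univ.filter (fun j => j ≠ i),
            2 / p 0 i * e (k-M) i * T * a (k-M) i j)
    (hdynx : ∀ (k : ℕ) (i : Fin n), x ((k : ℤ) + 1) i = x (k : ℤ) i + T • v (k : ℤ) i)
    (hcomb : ∀ (t : ℕ) (i : Fin n), v ((t : ℤ) + 1) i =
      e t i • (v (t : ℤ) i - (p t i * T) • v (t : ℤ) i +
        ∑ j ∈ Finset.univ.filter (fun j => j ≠ i),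
          (a t i j * T) • (x ((t : ℤ) - (τ t i j : ℤ)) j - x (t : ℤ) i))) :
    Sys n M β' where
  X := fun k i => x ((k:ℤ) - M) i l
  S := fun k i => x ((k:ℤ) - M) i l + 2 / p 0 i * v ((k:ℤ) - M) i l
  θ := fun i => T * p 0 i / 2
  lam := fun k i => T * p 0 i / 2 + e (k-M) i * (1 - p (k-M) i * T)
  del := fun k i => 1 - (T * p 0 i / 2 + e (k-M) i * (1 - p (k-M) i * T))
    - ∑ j ∈ Finset.univ.filter (fun j => j ≠ i), 2 / p 0 i * e (k-M) i * T * a (k-M) i j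
  w := fun k i j => 2 / p 0 i * e (k-M) i * T * a (k-M) i j
  D := fun k i j => k - τ (k-M) i j
  hβ0 := hβ'0
  hβ2 := hβ'2
  hθ1 := hθa
  hθ2 := hθb
  hlam := fun k hk i => hlamb k i hk
  hdel := fun k hk i => hdelb k i hk
  hw := fun k i j => by
    have h1 := hp0 i
    have h2 := he0 (k-M) i
    have h3 := ha0 (k-M) i j
    positivity
  hsum := fun k hk i => by ring
  hD1 := fun k hk i j => by beta_reduce; have := hτM (k-M) i j; omega
  hD2 := fun k hk i j => by beta_reduce; have := hτM (k-M) i j; omega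
  hX := by
    intro k hk i
    beta_reduce
    have hp0i := (hp0 i).ne'
    have ht1 : ((k+1 : ℕ) : ℤ) - M = ((k - M : ℕ) : ℤ) + 1 := by omega
    have ht2 : (k : ℤ) - M = ((k - M : ℕ) : ℤ) := by omega
    rw [ht1, ht2, hdynx (k-M) i]
    have hcoord : (x ((k-M : ℕ) : ℤ) i + T • v ((k-M : ℕ) : ℤ) i) l
        = x ((k-M : ℕ) : ℤ) i l + T * v ((k-M : ℕ) : ℤ) i l := rfl
    rw [hcoord]
    field_simp
    ring
  hS := by
    intro k hk i
    beta_reduce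
    have hp0i := (hp0 i).ne'
    set t := k - M with htdef
    have ht1 : ((k+1 : ℕ) : ℤ) - M = ((t : ℕ) : ℤ) + 1 := by omega
    have ht2 : (k : ℤ) - M = ((t : ℕ) : ℤ) := by omega
    have htD : ∀ j : Fin n, ((k - τ t i j : ℕ) : ℤ) - M = ((t:ℕ) : ℤ) - (τ t i j : ℤ) := by
      intro j
      have := hτM t i j
      omega
    rw [ht1, ht2, hdynx t i, hcomb t i]
    -- coordinates
    have hcoord1 : (x (t : ℤ) i + T • v (t : ℤ) i) l
        = x (t : ℤ) i l + T * v (t : ℤ) i l := rfl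
    have hcoord2 : (e t i • (v (t : ℤ) i - (p t i * T) • v (t : ℤ) i +
        ∑ j ∈ Finset.univ.filter (fun j => j ≠ i),
          (a t i j * T) • (x ((t : ℤ) - (τ t i j : ℤ)) j - x (t : ℤ) i))) l
        = e t i * (v (t : ℤ) i l - (p t i * T) * v (t : ℤ) i l +
          ∑ j ∈ Finset.univ.filter (fun j => j ≠ i),
            (a t i j * T) * (x ((t : ℤ) - (τ t i j : ℤ)) j l - x (t : ℤ) i l)) := by
      have h1 : (∑ j ∈ Finset.univ.filter (fun j => j ≠ i),
          (a t i j * T) • (x ((t : ℤ) - (τ t i j : ℤ)) j - x (t : ℤ) i)) l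
          = ∑ j ∈ Finset.univ.filter (fun j => j ≠ i),
            (a t i j * T) * (x ((t : ℤ) - (τ t i j : ℤ)) j l - x (t : ℤ) i l) := by
        rw [WithLp.ofLp_sum, Finset.sum_apply]
        rfl
      show e t i * _ = _
      rw [← h1]
      rfl
    rw [hcoord1, hcoord2]
    -- sum atoms
    set SA := ∑ j ∈ Finset.univ.filter (fun j => j ≠ i), a t i j with hSAdef
    set SX := ∑ j ∈ Finset.univ.filter (fun j => j ≠ i),
      a t i j * x ((t : ℤ) - (τ t i j : ℤ)) j l with hSXdef
    have hπsplit : ∑ j ∈ Finset.univ.filter (fun j => j ≠ i),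
        (a t i j * T) * (x ((t : ℤ) - (τ t i j : ℤ)) j l - x (t : ℤ) i l)
        = T * SX - T * SA * x (t : ℤ) i l := by
      have h1 : ∀ j ∈ Finset.univ.filter (fun j => j ≠ i),
          (a t i j * T) * (x ((t : ℤ) - (τ t i j : ℤ)) j l - x (t : ℤ) i l)
          = T * (a t i j * x ((t : ℤ) - (τ t i j : ℤ)) j l)
            - (a t i j * x (t : ℤ) i l) * T := fun j _ => by ring
      rw [Finset.sum_congr rfl h1, Finset.sum_sub_distrib, ← Finset.mul_sum, ← Finset.sum_mul,
        hSXdef, ← Finset.sum_mul]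
      ring
    have hwsum : ∑ j ∈ Finset.univ.filter (fun j => j ≠ i),
        2 / p 0 i * e t i * T * a t i j = 2 / p 0 i * e t i * T * SA := by
      rw [hSAdef, Finset.mul_sum]
    have hwX : ∑ j ∈ Finset.univ.filter (fun j => j ≠ i),
        2 / p 0 i * e t i * T * a t i j * x (((k - τ t i j : ℕ) : ℤ) - M) j l
        = 2 / p 0 i * e t i * T * SX := by
      have h1 : ∀ j ∈ Finset.univ.filter (fun j => j ≠ i),
          2 / p 0 i * e t i * T * a t i j * x (((k - τ t i j : ℕ) : ℤ) - M) j l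
          = 2 / p 0 i * e t i * T * (a t i j * x ((t : ℤ) - (τ t i j : ℤ)) j l) := by
        intro j _
        rw [htD j]
        ring
      rw [Finset.sum_congr rfl h1, ← Finset.mul_sum, hSXdef]
    show x (t:ℤ) i l + T * v (t:ℤ) i l + 2 / p 0 i * (e t i * _) = _
    rw [hπsplit]
    show _ = (T * p 0 i / 2 + e t i * (1 - p t i * T)) * (x (t:ℤ) i l + 2 / p 0 i * v (t:ℤ) i l)
      + (1 - (T * p 0 i / 2 + e t i * (1 - p t i * T))
        - ∑ j ∈ Finset.univ.filter (fun j => j ≠ i), 2 / p 0 i * e t i * T * a t i j)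
        * x (t:ℤ) i l
      + ∑ j ∈ Finset.univ.filter (fun j => j ≠ i),
          2 / p 0 i * e t i * T * a t i j * x (((k - τ t i j : ℕ) : ℤ) - M) j l
    rw [hwsum, hwX]
    field_simp
    ring

end Builder


set_option maxHeartbeats 2000000 in
/-- the velocity-constrained consensus theorem (Theorem 1 of the paper).
Under Assumption 1 on the nonconvex velocity constraint sets `V i`, the closed loop
`x_i(k+1) = x_i(k) + v_i(k)T`, `v_i(k+1) = S_{V_i}(y_i(k))` with
`y_i(k) = v_i(k) − p_i(k)v_i(k)T + π_i(k)`,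
`π_i(k) = Σ_{j≠i} a_{ij}(k)(x_j(k − τ_{ij}(k)) − x_i(k))T`, bounded delays
`τ_{ij}(k) ≤ M`, the gain conditions of Assumption 2, and the joint-connectivity
Assumption 3, achieves: (a) exponential consensus of the positions on some vector x̄,
and (b) `v_i(k) ∈ V_i` for all `i, k ≥ 0` with `v_i(k) → 0`. -/
theorem stmt0
    (n r : ℕ) (hn : 1 ≤ n) (T : ℝ) (hT : 0 < T)
    (V : Fin n → Set (EuclideanSpace ℝ (Fin r)))
    (x v : ℤ → Fin n → EuclideanSpace ℝ (Fin r))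
    (a : ℕ → Fin n → Fin n → ℝ) (τ : ℕ → Fin n → Fin n → ℕ)
    (p : ℕ → Fin n → ℝ) (M : ℕ) (μc : ℝ) (hμc : 0 < μc)
    (ρbar ρlow d : Fin n → ℝ)
    -- Assumption 1 on the constraint sets
    (hVne : ∀ i, (V i).Nonempty) (hVcl : ∀ i, IsClosed (V i))
    (hVbd : ∀ i, Bornology.IsBounded (V i))
    (hV0 : ∀ i, (0 : EuclideanSpace ℝ (Fin r)) ∈ V i)
    (hρbar : ∀ i, 0 < ρbar i ∧
      IsGreatest {c : ℝ | ∃ y ∈ V i, c = ‖SOp (V i) y‖} (ρbar i))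
    (hρlow : ∀ i, 0 < ρlow i ∧
      IsGLB {c : ℝ | ∃ y, y ∉ V i ∧ c = ‖SOp (V i) y‖} (ρlow i))
    -- edge weights and delays
    (ha0 : ∀ k i j, 0 ≤ a k i j)
    (halb : ∀ k i j, 0 < a k i j → μc ≤ a k i j)
    (hτ : ∀ k i j, τ k i j ≤ M)
    -- auxiliary quantities π, y, e, b
    (π y : ℕ → Fin n → EuclideanSpace ℝ (Fin r)) (e b : ℕ → Fin n → ℝ)
    (hπ : ∀ (k : ℕ) (i : Fin n), π k i =
      ∑ j ∈ Finset.univ.filter (fun j => j ≠ i),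
        (a k i j * T) • (x ((k : ℤ) - (τ k i j : ℤ)) j - x (k : ℤ) i))
    (hy : ∀ (k : ℕ) (i : Fin n),
      y k i = v (k : ℤ) i - (p k i * T) • v (k : ℤ) i + π k i)
    (he : ∀ (k : ℕ) (i : Fin n),
      e k i = if y k i = 0 then 1 else ‖SOp (V i) (y k i)‖ / ‖y k i‖)
    (hb : ∀ (k : ℕ) (i : Fin n), b k i = (1 - e k i * (1 - p k i * T)) / T)
    -- dynamics: initial conditions for k < 0, initial velocity, and the closed loop
    (hneg : ∀ k : ℤ, k < 0 → ∀ i, x (k + 1) i = x k i + T • v k i)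
    (hv0 : ∀ i, v 0 i = SOp (V i) (v 0 i))
    (hdynx : ∀ (k : ℕ) (i : Fin n), x ((k : ℤ) + 1) i = x (k : ℤ) i + T • v (k : ℤ) i)
    (hdynv : ∀ (k : ℕ) (i : Fin n), v ((k : ℤ) + 1) i = SOp (V i) (y k i))
    -- Assumption 2 on the gains
    (hpT : ∀ (k : ℕ) (i : Fin n), 0 < p k i * T ∧ p k i * T < 1)
    (hbp : ∀ (k : ℕ) (i : Fin n), 0 < b k i ∧ b k i ≤ p (k + 1) i ∧ p (k + 1) i < 1 / T)
    (hd : ∀ i, 0 < d i)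
    (hpd : ∀ (k : ℕ) (i : Fin n), (p k i) ^ 2 > 4 * d i ∧
      4 * d i ≥ 4 * ∑ j ∈ Finset.univ.filter (fun j => j ≠ i), a k i j)
    -- Assumption 3: joint connectivity
    (η : ℕ) (ks : ℕ → ℕ) (hks0 : ks 0 = 0)
    (hksmono : ∀ m, ks m < ks (m + 1)) (hksη : ∀ m, ks (m + 1) - ks m ≤ η)
    (hconn : ∀ m, ∃ root : Fin n, ∀ i : Fin n,
      Relation.ReflTransGen
        (fun u w => ∃ k, ks m ≤ k ∧ k < ks (m + 1) ∧ 0 < a k w u) root i) :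
    -- conclusions (a) and (b)
    (∃ xbar : EuclideanSpace ℝ (Fin r), ∃ C : ℝ, 0 < C ∧ ∃ μ : ℝ, 0 < μ ∧ μ ≤ 1 ∧
      ∀ (k : ℕ) (i : Fin n), ‖x (k : ℤ) i - xbar‖ ≤ C * (1 - μ) ^ k) ∧
    (∀ (k : ℕ) (i : Fin n), v (k : ℤ) i ∈ V i) ∧
    (∀ i : Fin n,
      Filter.Tendsto (fun k : ℕ => v (k : ℤ) i) Filter.atTop (nhds 0)) := by
  classical
  have hne' : (Finset.univ : Finset (Fin n)).Nonempty := ⟨⟨0, hn⟩, Finset.mem_univ _⟩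
  -- basic scalar facts
  have ppos : ∀ k i, 0 < p k i := by
    intro k i
    have h := (hpT k i).1
    nlinarith
  have hpT1 : ∀ k i, p k i * T ≤ 1 := fun k i => (hpT k i).2.le
  have he0 : ∀ k i, 0 ≤ e k i := by
    intro k i
    rw [he k i]
    split_ifs with h
    · norm_num
    · exact div_nonneg (norm_nonneg _) (norm_nonneg _)
  have he1 : ∀ k i, e k i ≤ 1 := by
    intro k i
    rw [he k i]
    split_ifs with h
    · norm_num
    · have hpos : 0 < ‖y k i‖ := norm_pos_iff.mpr h
      rw [div_le_one hpos]
      exact SOpAux.norm_SOp_le (V i) (hV0 i) (y k i)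
  have hbT : ∀ k i, b k i * T = 1 - e k i * (1 - p k i * T) := by
    intro k i
    rw [hb k i]
    field_simp
  have hble : ∀ k i, p k i ≤ b k i := by
    intro k i
    have h1 : e k i * (1 - p k i * T) ≤ 1 - p k i * T := by
      nlinarith [he0 k i, he1 k i, (hpT k i).2]
    have h2 := hbT k i
    nlinarith
  have hpmono : ∀ k i, p k i ≤ p (k+1) i :=
    fun k i => le_trans (hble k i) (hbp k i).2.1
  have hp0le : ∀ k i, p 0 i ≤ p k i := by
    intro k i
    induction k with
    | zero => exact le_refl _
    | succ k ih => exact le_trans ih (hpmono k i)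
  -- the closed loop as a linear recursion
  have hSOpsmul : ∀ (k : ℕ) (i : Fin n), v ((k:ℤ) + 1) i = e k i • y k i := by
    intro k i
    rw [hdynv k i, he k i]
    split_ifs with h
    · rw [h]
      simp [SOp]
    · exact SOpAux.SOp_eq_smul (V i) (hV0 i) _ h
  have hcomb : ∀ (t : ℕ) (i : Fin n), v ((t : ℤ) + 1) i =
      e t i • (v (t : ℤ) i - (p t i * T) • v (t : ℤ) i +
        ∑ j ∈ Finset.univ.filter (fun j => j ≠ i),
          (a t i j * T) • (x ((t : ℤ) - (τ t i j : ℤ)) j - x (t : ℤ) i)) := by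
    intro t i
    rw [hSOpsmul t i, hy t i, hπ t i]
  -- velocities stay in the constraint sets
  have hvV : ∀ (k : ℕ) (i : Fin n), v (k : ℤ) i ∈ V i := by
    intro k i
    cases k with
    | zero =>
      have h0 : ((0:ℕ) : ℤ) = 0 := rfl
      rw [h0, hv0 i]
      exact SOpAux.SOp_mem (V i) (hVcl i) (hV0 i) _
    | succ k =>
      have hcast : ((k+1 : ℕ) : ℤ) = (k : ℤ) + 1 := by push_cast; ring
      rw [hcast, hdynv k i]
      exact SOpAux.SOp_mem (V i) (hVcl i) (hV0 i) _
  -- uniform velocity bound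
  have hRs : ∀ i, ∃ R, ∀ z ∈ V i, ‖z‖ ≤ R := by
    intro i
    exact isBounded_iff_forall_norm_le.mp (hVbd i)
  choose R hR using hRs
  set Rv := Finset.univ.sup' hne' R with hRvdef
  have hvR : ∀ (k : ℕ) (i : Fin n), ‖v (k:ℤ) i‖ ≤ Rv :=
    fun k i => le_trans (hR i _ (hvV k i)) (Finset.le_sup' R (Finset.mem_univ i))
  have hRv0 : 0 ≤ Rv := le_trans (norm_nonneg _) (hvR 0 ⟨0, hn⟩)
  -- the base constant β₀
  set β₀ : ℝ := min (1/2) (Finset.univ.inf' hne'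
    (fun i => min (T * p 0 i / 2) (T * (p 0 i^2 - 4*d i)/(2*p 0 i)))) with hβ₀def
  have hβ₀pos : 0 < β₀ := by
    rw [hβ₀def]
    apply lt_min (by norm_num)
    rw [Finset.lt_inf'_iff]
    intro i _
    have h1 := ppos 0 i
    have h2 := (hpd 0 i).1
    have h3 := hd i
    apply lt_min
    · positivity
    · have : 0 < p 0 i ^ 2 - 4 * d i := by linarith
      positivity
  have hβ₀half : β₀ ≤ 1/2 := min_le_left _ _
  have hβ₀θ : ∀ i, β₀ ≤ T * p 0 i / 2 := by
    intro i
    refine le_trans (min_le_right _ _) (le_trans (Finset.inf'_le _ (Finset.mem_univ i)) ?_)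
    exact min_le_left _ _
  have hβ₀del : ∀ i, β₀ ≤ T * (p 0 i^2 - 4*d i)/(2*p 0 i) := by
    intro i
    refine le_trans (min_le_right _ _) (le_trans (Finset.inf'_le _ (Finset.mem_univ i)) ?_)
    exact min_le_right _ _
  -- component bounds for the builder, for any 0 < β' ≤ β₀
  have hθb : ∀ β', β' ≤ β₀ → ∀ i, T * p 0 i / 2 ≤ 1 - β' := by
    intro β' hβ' i
    have h1 := (hpT 0 i).2
    have h2 : T * p 0 i = p 0 i * T := by ring
    nlinarith [hβ₀half]
  have hlamb : ∀ β', β' ≤ β₀ → ∀ k i, M ≤ k →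
      β' ≤ T * p 0 i / 2 + e (k-M) i * (1 - p (k-M) i * T) := by
    intro β' hβ' k i hk
    have h1 := he0 (k-M) i
    have h2 := hpT1 (k-M) i
    have h3 := hβ₀θ i
    nlinarith
  have hdelb : ∀ β', β' ≤ β₀ → ∀ k i, M ≤ k →
      β' ≤ 1 - (T * p 0 i / 2 + e (k-M) i * (1 - p (k-M) i * T))
        - ∑ j ∈ Finset.univ.filter (fun j => j ≠ i),
            2 / p 0 i * e (k-M) i * T * a (k-M) i j := by
    intro β' hβ' k i hk
    set t := k - M with htdef
    have hA0 : 0 ≤ ∑ j ∈ Finset.univ.filter (fun j => j ≠ i), a t i j :=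
      Finset.sum_nonneg fun j _ => ha0 t i j
    have hAd : ∑ j ∈ Finset.univ.filter (fun j => j ≠ i), a t i j ≤ d i := by
      have := (hpd t i).2
      linarith
    have hsum2 : ∑ j ∈ Finset.univ.filter (fun j => j ≠ i),
        2 / p 0 i * e t i * T * a t i j
        = 2 / p 0 i * e t i * T * ∑ j ∈ Finset.univ.filter (fun j => j ≠ i), a t i j := by
      rw [Finset.mul_sum]
    rw [hsum2]
    have hp0 := ppos 0 i
    have hept : e t i * (1 - p t i * T) = 1 - b t i * T := by
      have := hbT t i; linarith
    rw [hept]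
    -- goal: β' ≤ 1 - (T p0/2 + 1 - bT) - (2/p0) e T A = bT - Tp0/2 - (2/p0)eTA
    have hb1 : p 0 i ≤ b t i := le_trans (hp0le t i) (hble t i)
    have hkey : T * (p 0 i^2 - 4*d i)/(2*p 0 i)
        ≤ 1 - (T * p 0 i / 2 + (1 - b t i * T))
          - 2 / p 0 i * e t i * T * ∑ j ∈ Finset.univ.filter (fun j => j ≠ i), a t i j := by
      have hterm : 2 / p 0 i * e t i * T * ∑ j ∈ Finset.univ.filter (fun j => j ≠ i), a t i j
          ≤ 2 / p 0 i * T * d i := by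
        have h2p : 0 ≤ 2 / p 0 i * T := by positivity
        have hea : e t i * ∑ j ∈ Finset.univ.filter (fun j => j ≠ i), a t i j ≤ d i := by
          nlinarith [he0 t i, he1 t i]
        calc 2 / p 0 i * e t i * T * ∑ j ∈ Finset.univ.filter (fun j => j ≠ i), a t i j
            = 2 / p 0 i * T * (e t i * ∑ j ∈ Finset.univ.filter (fun j => j ≠ i), a t i j) := by
              ring
        _ ≤ 2 / p 0 i * T * d i := mul_le_mul_of_nonneg_left hea h2p
      have heq : T * p 0 i / 2 - 2 / p 0 i * T * d i = T * (p 0 i^2 - 4*d i)/(2*p 0 i) := by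
        field_simp
        ring
      nlinarith
    exact le_trans (le_trans hβ' (hβ₀del i)) hkey
  -- the β₀ system, used only to derive boundedness
  -- boundedness of the positions
  set B0 := Finset.univ.sup' hne' (fun i => max (‖x 0 i‖ + 2 / p 0 i * ‖v 0 i‖)
    ((Finset.Icc 0 M).sup' (Finset.nonempty_Icc.mpr (Nat.zero_le M))
      (fun m => ‖x ((m:ℤ) - M) i‖))) with hB0def
  have hB0X : ∀ i, ∀ ll, ll ≤ M → ‖x ((ll:ℤ) - M) i‖ ≤ B0 := by
    intro i ll hll
    have h := Finset.le_sup' (fun i => max (‖x 0 i‖ + 2 / p 0 i * ‖v 0 i‖)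
      ((Finset.Icc 0 M).sup' (Finset.nonempty_Icc.mpr (Nat.zero_le M))
        (fun m => ‖x ((m:ℤ) - M) i‖))) (Finset.mem_univ i)
    have h2 : ‖x ((ll:ℤ) - M) i‖ ≤ (Finset.Icc (0:ℕ) M).sup'
        (Finset.nonempty_Icc.mpr (Nat.zero_le M)) (fun m : ℕ => ‖x ((m:ℤ) - M) i‖) :=
      Finset.le_sup' (f := fun m : ℕ => ‖x ((m:ℤ) - M) i‖)
        (Finset.mem_Icc.mpr ⟨Nat.zero_le ll, hll⟩)
    exact le_trans (le_trans h2 (le_max_right _ _)) h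
  have hB0S : ∀ i, ‖x 0 i‖ + 2 / p 0 i * ‖v 0 i‖ ≤ B0 := by
    intro i
    have h := Finset.le_sup' (fun i => max (‖x 0 i‖ + 2 / p 0 i * ‖v 0 i‖)
      ((Finset.Icc 0 M).sup' (Finset.nonempty_Icc.mpr (Nat.zero_le M))
        (fun m => ‖x ((m:ℤ) - M) i‖))) (Finset.mem_univ i)
    exact le_trans (le_max_left _ _) h
  have hbdd : ∀ l : Fin r, ∀ (mm : ℕ) (i : Fin n), |x ((mm:ℤ) - M) i l| ≤ B0 := by
    intro l
    set Γ0 := mkSys n r M T β₀ x v e p a τ l hT (ppos 0) hβ₀pos hβ₀half hβ₀θ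
      (hθb β₀ (le_refl _)) he0 ha0 hpT1 hτ (hlamb β₀ (le_refl _)) (hdelb β₀ (le_refl _))
      hdynx hcomb with hΓ0def
    have hM0 : ((M:ℕ):ℤ) - M = (0:ℤ) := by omega
    have hS0 : ∀ i, Γ0.S M i ≤ B0 := by
      intro i
      show x ((M:ℤ) - M) i l + 2 / p 0 i * v ((M:ℤ) - M) i l ≤ B0
      rw [hM0]
      have h1 : x 0 i l ≤ ‖x 0 i‖ :=
        le_trans (le_abs_self _) (euclid_abs_coord_le (x 0 i) l)
      have h2 : 2 / p 0 i * v 0 i l ≤ 2 / p 0 i * ‖v 0 i‖ := by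
        apply mul_le_mul_of_nonneg_left _ (by have := ppos 0 i; positivity)
        exact le_trans (le_abs_self _) (euclid_abs_coord_le (v 0 i) l)
      linarith [hB0S i]
    have hS0n : ∀ i, Γ0.neg.S M i ≤ B0 := by
      intro i
      show -(x ((M:ℤ) - M) i l + 2 / p 0 i * v ((M:ℤ) - M) i l) ≤ B0
      rw [hM0]
      have h1 : -(x 0 i l) ≤ ‖x 0 i‖ :=
        le_trans (neg_le_abs _) (euclid_abs_coord_le (x 0 i) l)
      have h2 : -(2 / p 0 i * v 0 i l) ≤ 2 / p 0 i * ‖v 0 i‖ := by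
        have h3 : -(v 0 i l) ≤ ‖v 0 i‖ :=
          le_trans (neg_le_abs _) (euclid_abs_coord_le (v 0 i) l)
        have h4 : (0:ℝ) ≤ 2 / p 0 i := by have := ppos 0 i; positivity
        nlinarith
      linarith [hB0S i]
    have hX0 : ∀ ll, ll ≤ M → ∀ i, Γ0.X ll i ≤ B0 := by
      intro ll hll i
      show x ((ll:ℤ) - M) i l ≤ B0
      exact le_trans (le_trans (le_abs_self _) (euclid_abs_coord_le _ l)) (hB0X i ll hll)
    have hX0n : ∀ ll, ll ≤ M → ∀ i, Γ0.neg.X ll i ≤ B0 := by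
      intro ll hll i
      show -(x ((ll:ℤ) - M) i l) ≤ B0
      exact le_trans (le_trans (neg_le_abs _) (euclid_abs_coord_le _ l)) (hB0X i ll hll)
    have hup := Γ0.bounded_above hS0 hX0
    have hdn := Γ0.neg.bounded_above hS0n hX0n
    intro mm i
    rw [abs_le]
    constructor
    · have h := hdn.1 mm i
      have h2 : -(x ((mm:ℤ) - M) i l) ≤ B0 := h
      linarith
    · exact hup.1 mm i
  have hxnorm : ∀ (mm : ℕ) (i : Fin n), ‖x ((mm:ℤ) - M) i‖ ≤ r * B0 := by
    intro mm i
    refine le_trans (euclid_norm_le_sum _) ?_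
    calc ∑ l, |x ((mm:ℤ) - M) i l| ≤ ∑ _l : Fin r, B0 :=
      Finset.sum_le_sum (fun l _ => hbdd l mm i)
    _ = r * B0 := by
      rw [Finset.sum_const, Finset.card_univ, Fintype.card_fin, nsmul_eq_mul]
  have hxt : ∀ (t : ℕ) (i : Fin n), ‖x (t:ℤ) i‖ ≤ r * B0 := by
    intro t i
    have h := hxnorm (t + M) i
    have hcast : ((t + M : ℕ):ℤ) - M = (t:ℤ) := by push_cast; ring
    rwa [hcast] at h
  have hxτ : ∀ (t : ℕ) (i j : Fin n), ‖x ((t:ℤ) - (τ t i j:ℤ)) j‖ ≤ r * B0 := by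
    intro t i j
    have h := hxnorm (t + M - τ t i j) j
    have hcast : ((t + M - τ t i j : ℕ):ℤ) - M = (t:ℤ) - (τ t i j:ℤ) := by
      have := hτ t i j; omega
    rwa [hcast] at h
  have hB00 : 0 ≤ B0 := le_trans (norm_nonneg _) (hB0X ⟨0,hn⟩ 0 (Nat.zero_le M))
  have hrB0 : (0:ℝ) ≤ r * B0 := by positivity
  -- bound on y
  set dmax := Finset.univ.sup' hne' d with hdmaxdef
  have hdmax : ∀ i, d i ≤ dmax := fun i => Finset.le_sup' d (Finset.mem_univ i)
  have hdmax0 : 0 ≤ dmax := le_trans (hd ⟨0,hn⟩).le (hdmax _)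
  set Ymax := Rv + dmax * T * (2*(r*B0)) + 1 with hYdef
  have hY0 : 0 < Ymax := by
    have h1 : 0 ≤ dmax * T * (2*(r*B0)) := by
      apply mul_nonneg (mul_nonneg hdmax0 hT.le)
      linarith
    rw [hYdef]
    linarith
  have hyB : ∀ (t : ℕ) (i : Fin n), ‖y t i‖ ≤ Ymax := by
    intro t i
    rw [hy t i]
    have h1 : ‖v (t:ℤ) i - (p t i * T) • v (t:ℤ) i‖ ≤ Rv := by
      have heq : v (t:ℤ) i - (p t i * T) • v (t:ℤ) i = (1 - p t i * T) • v (t:ℤ) i := by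
        rw [sub_smul, one_smul]
      rw [heq, norm_smul, Real.norm_eq_abs,
        abs_of_nonneg (by linarith [(hpT t i).2] : (0:ℝ) ≤ 1 - p t i * T)]
      calc (1 - p t i * T) * ‖v (t:ℤ) i‖ ≤ 1 * ‖v (t:ℤ) i‖ :=
        mul_le_mul_of_nonneg_right (by linarith [(hpT t i).1]) (norm_nonneg _)
      _ = ‖v (t:ℤ) i‖ := one_mul _
      _ ≤ Rv := hvR t i
    have h2 : ‖π t i‖ ≤ dmax * T * (2*(r*B0)) := by
      rw [hπ t i]
      refine le_trans (norm_sum_le _ _) ?_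
      have hterm : ∀ j ∈ Finset.univ.filter (fun j => j ≠ i),
          ‖(a t i j * T) • (x ((t:ℤ) - (τ t i j:ℤ)) j - x (t:ℤ) i)‖
          ≤ a t i j * (T * (2*(r*B0))) := by
        intro j _
        rw [norm_smul, Real.norm_eq_abs, abs_of_nonneg (mul_nonneg (ha0 t i j) hT.le)]
        have hsub : ‖x ((t:ℤ) - (τ t i j:ℤ)) j - x (t:ℤ) i‖ ≤ 2*(r*B0) := by
          refine le_trans (norm_sub_le _ _) ?_
          have ht1 := hxτ t i j
          have ht2 := hxt t i
          linarith
        calc a t i j * T * ‖x ((t:ℤ) - (τ t i j:ℤ)) j - x (t:ℤ) i‖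
            ≤ a t i j * T * (2*(r*B0)) :=
          mul_le_mul_of_nonneg_left hsub (mul_nonneg (ha0 t i j) hT.le)
        _ = a t i j * (T * (2*(r*B0))) := by ring
      refine le_trans (Finset.sum_le_sum hterm) ?_
      rw [← Finset.sum_mul]
      have hAd : ∑ j ∈ Finset.univ.filter (fun j => j ≠ i), a t i j ≤ dmax := by
        have := (hpd t i).2
        have := hdmax i
        linarith
      calc (∑ j ∈ Finset.univ.filter (fun j => j ≠ i), a t i j) * (T * (2*(r*B0)))
          ≤ dmax * (T * (2*(r*B0))) := by
            apply mul_le_mul_of_nonneg_right hAd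
            have : (0:ℝ) ≤ T := hT.le
            positivity
      _ = dmax * T * (2*(r*B0)) := by ring
    calc ‖v (t:ℤ) i - (p t i * T) • v (t:ℤ) i + π t i‖
        ≤ ‖v (t:ℤ) i - (p t i * T) • v (t:ℤ) i‖ + ‖π t i‖ := norm_add_le _ _
    _ ≤ Rv + dmax * T * (2*(r*B0)) := add_le_add h1 h2
    _ ≤ Ymax := by rw [hYdef]; linarith
  -- lower bound on e
  have heminpos : ∀ i, 0 < min 1 (ρlow i / Ymax) :=
    fun i => lt_min one_pos (div_pos (hρlow i).1 hY0)
  have helow : ∀ (t : ℕ) (i : Fin n), min 1 (ρlow i / Ymax) ≤ e t i := by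
    intro t i
    rw [he t i]
    split_ifs with h
    · exact min_le_left _ _
    · have hy0 : (0:ℝ) < ‖y t i‖ := norm_pos_iff.mpr h
      have hglb : ∀ z, z ∉ V i → ρlow i ≤ ‖SOp (V i) z‖ := by
        intro z hz
        exact (hρlow i).2.1 ⟨z, hz, rfl⟩
      have hmin := SOpAux.norm_SOp_ge (V i) (hV0 i) hglb (y t i)
      rcases le_or_gt (‖y t i‖) (ρlow i) with hc | hc
      · have h1 : min (ρlow i) ‖y t i‖ = ‖y t i‖ := min_eq_right hc
        rw [h1] at hmin
        have h2 : 1 ≤ ‖SOp (V i) (y t i)‖ / ‖y t i‖ := (one_le_div hy0).mpr hmin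
        exact le_trans (min_le_left _ _) h2
      · have h1 : min (ρlow i) ‖y t i‖ = ρlow i := min_eq_left hc.le
        rw [h1] at hmin
        have h2 : ρlow i / Ymax ≤ ρlow i / ‖y t i‖ := by
          rw [div_le_div_iff₀ hY0 hy0]
          have := (hρlow i).1
          have := hyB t i
          nlinarith
        have h3 : ρlow i / ‖y t i‖ ≤ ‖SOp (V i) (y t i)‖ / ‖y t i‖ :=
          (div_le_div_iff_of_pos_right hy0).mpr hmin
        exact le_trans (min_le_right _ _) (le_trans h2 h3)
  -- the final constant β₁
  set β₁ := min β₀ (Finset.univ.inf' hne'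
    (fun i => 2 / p 0 i * min 1 (ρlow i / Ymax) * T * μc)) with hβ₁def
  have hβ₁pos : 0 < β₁ := by
    rw [hβ₁def]
    apply lt_min hβ₀pos
    rw [Finset.lt_inf'_iff]
    intro i _
    have h1 := heminpos i
    have h2 := ppos 0 i
    positivity
  have hβ₁β₀ : β₁ ≤ β₀ := min_le_left _ _
  have hβ₁w : ∀ (t : ℕ) (i j : Fin n), 0 < a t i j →
      β₁ ≤ 2 / p 0 i * e t i * T * a t i j := by
    intro t i j ha
    have h1 : β₁ ≤ 2 / p 0 i * min 1 (ρlow i / Ymax) * T * μc := by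
      refine le_trans (min_le_right _ _) ?_
      exact Finset.inf'_le _ (Finset.mem_univ i)
    have hμa := halb t i j ha
    have he' := helow t i
    have hp0 := ppos 0 i
    have key : min 1 (ρlow i / Ymax) * μc ≤ e t i * a t i j :=
      mul_le_mul he' hμa hμc.le (he0 t i)
    calc β₁ ≤ 2 / p 0 i * min 1 (ρlow i / Ymax) * T * μc := h1
    _ = (2 / p 0 i * T) * (min 1 (ρlow i / Ymax) * μc) := by ring
    _ ≤ (2 / p 0 i * T) * (e t i * a t i j) :=
        mul_le_mul_of_nonneg_left key (by positivity)
    _ = 2 / p 0 i * e t i * T * a t i j := by ring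
  -- connectivity windows
  have hη1 : 1 ≤ η := by
    have h1 := hksmono 0
    have h2 := hksη 0
    omega
  have hfind : ∀ t0 : ℕ, ∃ m, t0 ≤ ks m ∧ ks (m+1) ≤ t0 + 2*η := by
    intro t0
    have hks_ge : ∀ m, m ≤ ks m := fun m => (strictMono_nat_of_lt_succ hksmono).le_apply
    have hex : ∃ m, t0 ≤ ks m := ⟨t0, hks_ge t0⟩
    refine ⟨Nat.find hex, Nat.find_spec hex, ?_⟩
    rcases Nat.eq_zero_or_pos (Nat.find hex) with hz | hpos
    · rw [hz]
      have hspec := Nat.find_spec hex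
      rw [hz, hks0] at hspec
      have := hksη 0
      have := hksmono 0
      rw [hks0] at *
      omega
    · have hprev : ¬ t0 ≤ ks (Nat.find hex - 1) := Nat.find_min hex (by omega)
      have h1 := hksη (Nat.find hex - 1)
      have h2 := hksη (Nat.find hex)
      have h3 := hksmono (Nat.find hex - 1)
      have h4 := hksmono (Nat.find hex)
      have h5 : Nat.find hex - 1 + 1 = Nat.find hex := by omega
      rw [h5] at h1 h3
      omega
  have hconnA : ∀ t, M ≤ t → ∃ root : Fin n, ∀ i : Fin n,
      Relation.ReflTransGen (fun u v' => ∃ k, t ≤ k ∧ k < t + 2*η ∧ u ≠ v' ∧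
        β₁ ≤ 2 / p 0 v' * e (k - M) v' * T * a (k - M) v' u) root i := by
    intro t ht
    obtain ⟨m, hm1, hm2⟩ := hfind (t - M)
    obtain ⟨root, hroot⟩ := hconn m
    refine ⟨root, fun i => ?_⟩
    have hmap : ∀ {c : Fin n}, Relation.ReflTransGen
        (fun u w => ∃ k, ks m ≤ k ∧ k < ks (m+1) ∧ 0 < a k w u) root c →
        Relation.ReflTransGen (fun u v' => ∃ k, t ≤ k ∧ k < t + 2*η ∧ u ≠ v' ∧
          β₁ ≤ 2 / p 0 v' * e (k - M) v' * T * a (k - M) v' u) root c := by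
      intro c hc
      induction hc with
      | refl => exact Relation.ReflTransGen.refl
      | @tail bb cc hab hbc ih =>
        by_cases hbceq : bb = cc
        · exact hbceq ▸ ih
        · refine ih.tail ?_
          obtain ⟨k, hk1, hk2, hka⟩ := hbc
          refine ⟨k + M, by omega, by omega, hbceq, ?_⟩
          have hw := hβ₁w k cc bb hka
          have hkM : k + M - M = k := by omega
          rw [hkM]
          exact hw
    exact hmap (hroot i)
  -- apply the abstract consensus theorem per coordinate
  set L := 2*M+1 + n*(2*η+M+2) with hLdef
  have hcons : ∀ l : Fin r, ∃ zbar C : ℝ, 0 ≤ C ∧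
      (∀ (k : ℕ) (i : Fin n), |(x ((k:ℤ) - M) i l) - zbar| ≤ C * qval β₁ L ^ k) ∧
      (∀ k, M ≤ k → ∀ i : Fin n,
        |(x ((k:ℤ) - M) i l + 2 / p 0 i * v ((k:ℤ) - M) i l) - zbar|
          ≤ C * qval β₁ L ^ k) := by
    intro l
    have h := (mkSys n r M T β₁ x v e p a τ l hT (ppos 0) hβ₁pos (le_trans hβ₁β₀ hβ₀half)
      (fun i => le_trans hβ₁β₀ (hβ₀θ i)) (hθb β₁ hβ₁β₀) he0 ha0 hpT1 hτ
      (hlamb β₁ hβ₁β₀) (hdelb β₁ hβ₁β₀) hdynx hcomb).consensus hne' (2*η) L hLdef hconnA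
    obtain ⟨zbar, C, hC0, hX, hS⟩ := h
    exact ⟨zbar, C, hC0, hX, hS⟩
  choose zb Cf hCf0 hXb hSb using hcons
  have hqhalf : β₁ ≤ 1/2 := le_trans hβ₁β₀ hβ₀half
  have hq0 : 0 ≤ qval β₁ L := qval_nonneg hβ₁pos hqhalf L
  have hq1 : qval β₁ L < 1 := qval_lt_one hβ₁pos hqhalf (by omega)
  set q := qval β₁ L with hqdef
  set Csum := ∑ l : Fin r, Cf l with hCsumdef
  have hCsum0 : 0 ≤ Csum := Finset.sum_nonneg fun l _ => hCf0 l
  set xbar : EuclideanSpace ℝ (Fin r) := WithLp.toLp 2 (fun l => zb l) with hxbardef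
  refine ⟨⟨xbar, Csum + 1, by linarith, 1 - q,
    by linarith, by linarith, ?_⟩, hvV, ?_⟩
  · -- position consensus
    intro k i
    have hq' : (1:ℝ) - (1 - q) = q := by ring
    rw [hq']
    have hcoordb : ∀ l : Fin r, |x (k:ℤ) i l - zb l| ≤ Cf l * q ^ k := by
      intro l
      have h := hXb l (k + M) i
      have hcast : ((k + M : ℕ):ℤ) - M = (k:ℤ) := by push_cast; ring
      rw [hcast] at h
      calc |x (k:ℤ) i l - zb l| ≤ Cf l * q ^ (k+M) := h
      _ ≤ Cf l * q ^ k := mul_le_mul_of_nonneg_left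
          (pow_le_pow_of_le_one hq0 hq1.le (by omega)) (hCf0 l)
    have hnorm : ‖x (k:ℤ) i - xbar‖ ≤ ∑ l, |x (k:ℤ) i l - zb l| :=
      euclid_norm_le_sum (x (k:ℤ) i - xbar)
    calc ‖x (k:ℤ) i - xbar‖ ≤ ∑ l, |x (k:ℤ) i l - zb l| := hnorm
    _ ≤ ∑ l, Cf l * q ^ k := Finset.sum_le_sum (fun l _ => hcoordb l)
    _ = Csum * q ^ k := by rw [hCsumdef, Finset.sum_mul]
    _ ≤ (Csum + 1) * q ^ k := by nlinarith [pow_nonneg hq0 k]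
  · -- velocities tend to zero
    intro i
    apply squeeze_zero_norm (a := fun k : ℕ => (p 0 i * Csum) * q ^ k)
    · intro k
      have hvl : ∀ l : Fin r, |v (k:ℤ) i l| ≤ p 0 i * Cf l * q ^ k := by
        intro l
        have hS := hSb l (k + M) (by omega) i
        have hX := hXb l (k + M) i
        have hcast : ((k + M : ℕ):ℤ) - M = (k:ℤ) := by push_cast; ring
        rw [hcast] at hS hX
        have hp0 := ppos 0 i
        have hvid : v (k:ℤ) i l = ((x (k:ℤ) i l + 2 / p 0 i * v (k:ℤ) i l)
            - x (k:ℤ) i l) * (p 0 i / 2) := by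
          field_simp
          ring
        rw [hvid, abs_mul, abs_of_pos (by positivity : (0:ℝ) < p 0 i / 2)]
        have htri : |(x (k:ℤ) i l + 2 / p 0 i * v (k:ℤ) i l) - x (k:ℤ) i l|
            ≤ 2 * (Cf l * q ^ (k+M)) := by
          have h3 : (x (k:ℤ) i l + 2 / p 0 i * v (k:ℤ) i l) - x (k:ℤ) i l
              = ((x (k:ℤ) i l + 2 / p 0 i * v (k:ℤ) i l) - zb l)
                + -((x (k:ℤ) i l) - zb l) := by ring
          rw [h3]
          refine le_trans (abs_add_le _ _) ?_
          rw [abs_neg]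
          linarith
        calc |(x (k:ℤ) i l + 2 / p 0 i * v (k:ℤ) i l) - x (k:ℤ) i l| * (p 0 i / 2)
            ≤ (2 * (Cf l * q ^ (k+M))) * (p 0 i / 2) :=
          mul_le_mul_of_nonneg_right htri (by positivity)
        _ = p 0 i * (Cf l * q ^ (k+M)) := by ring
        _ ≤ p 0 i * (Cf l * q ^ k) := by
            apply mul_le_mul_of_nonneg_left _ hp0.le
            exact mul_le_mul_of_nonneg_left
              (pow_le_pow_of_le_one hq0 hq1.le (by omega)) (hCf0 l)
        _ = p 0 i * Cf l * q ^ k := by ring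
      calc ‖v (k:ℤ) i‖ ≤ ∑ l, |v (k:ℤ) i l| := euclid_norm_le_sum _
      _ ≤ ∑ l, p 0 i * Cf l * q ^ k := Finset.sum_le_sum (fun l _ => hvl l)
      _ = (p 0 i * Csum) * q ^ k := by
          rw [hCsumdef, Finset.mul_sum, Finset.sum_mul]
          try (apply Finset.sum_congr rfl; intro l _; ring)
    · have h1 := tendsto_pow_atTop_nhds_zero_of_lt_one hq0 hq1
      have h2 := h1.const_mul (p 0 i * Csum)
      simpa using h2
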